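/- arXiv:1608.00246 — 5 statements merged into one kernel-verified Lean document; each statement's English description precedes it below -/
import Mathlib

section
/- For every integer g ≥ 0 there exists a connected closed 3-colored graph with colors {0,1,2} which is a Feynman graph of the quartic complex matrix model and whose Euler characteristic equals 2 − 2g. (This is the combinatorial content of Lemma 'surjectivity in rank 2': every closed connected orientable surface, of any genus g, is represented by a vacuum Feynman graph of the complex quartic matrix model.) -/
/-!  Closed colored graphs (colored tensor model / matrix model Feynman graphs). -/

/-- A closed `D`-colored graph: a finite set `W` of white vertices, a finite set `B`
of black vertices, and for each color `c : Fin D` a bijection `σ c : W ≃ B`;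
the color-`c` edges are the pairs `(w, σ c w)`. -/
structure CGraph (D : ℕ) where
  W : Type
  B : Type
  finW : Finite W
  finB : Finite B
  σ : Fin D → W ≃ B

namespace CGraph

variable {D : ℕ}

/-- The permutation `σ_d⁻¹ ∘ σ_c` of the white vertices. Its orbits are the
(cd)-bicolored faces. -/
def biperm (G : CGraph D) (c d : Fin D) : Equiv.Perm G.W :=
  (G.σ c).trans (G.σ d).symm

/-- The "same cycle" setoid of a permutation. -/
def cycleSetoid {α : Type*} (π : Equiv.Perm α) : Setoid α where
  r := π.SameCycle
  iseqv := ⟨fun _ => ⟨0, by simp⟩, fun h => h.symm, fun h h' => h.trans h'⟩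

/-- The number of cycles (orbits) of a permutation. -/
noncomputable def numCycles {α : Type*} (π : Equiv.Perm α) : ℕ :=
  Nat.card (Quotient (cycleSetoid π))

/-- Total number of bicolored faces of a closed 3-colored graph
(over the three pairs of colors). -/
noncomputable def faces (G : CGraph 3) : ℕ :=
  numCycles (G.biperm 0 1) + numCycles (G.biperm 0 2) + numCycles (G.biperm 1 2)

/-- Euler characteristic of a closed 3-colored graph:
`χ(G) = #vertices − #edges + #faces = 2|W| − 3|W| + F(G)`. -/
noncomputable def euler (G : CGraph 3) : ℤ :=
  2 * (Nat.card G.W : ℤ) - 3 * (Nat.card G.W : ℤ) + (faces G : ℤ)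

/-- Connectedness: the subgroup generated by all the permutations `σ_d⁻¹ ∘ σ_c`
acts transitively on the white vertices. -/
def Connected (G : CGraph D) : Prop :=
  ∀ v w : G.W,
    ∃ π ∈ Subgroup.closure {π : Equiv.Perm G.W | ∃ c d : Fin D, π = G.biperm c d}, π v = w

/-- The number of white vertices in the (cd)-bicolored face through `v`
(the face itself has twice as many vertices). -/
noncomputable def faceSize (G : CGraph 3) (c d : Fin 3) (v : G.W) : ℕ :=
  Nat.card {w : G.W // (G.biperm c d).SameCycle v w}

/-- A closed 3-colored graph with colors `{0,1,2}` is a Feynman graph of the quartic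
complex matrix model iff every (12)-bicolored face has exactly 4 vertices, i.e. every
orbit of `σ₂⁻¹ ∘ σ₁` has exactly 2 elements. -/
def QuarticFeynman (G : CGraph 3) : Prop :=
  ∀ v : G.W, G.faceSize 1 2 v = 2

end CGraph

section Aux

/-- Same-cycle relation for a translation on an abelian group. -/
lemma sameCycle_addLeft {M : Type*} [AddCommGroup M] (a v w : M) :
    (Equiv.addLeft a : Equiv.Perm M).SameCycle v w ↔ ∃ n : ℤ, v + n • a = w := by
  constructor
  · rintro ⟨n, hn⟩
    exact ⟨n, by simpa [add_comm] using hn⟩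
  · rintro ⟨n, hn⟩
    exact ⟨n, by simpa [add_comm] using hn⟩

/-- Counting the orbits of a translation on `ZMod N`. -/
lemma numCycles_addLeft {N m : ℕ} [NeZero N] [NeZero m] (a : ZMod N) (hdvd : m ∣ N)
    (h1 : ZMod.castHom hdvd (ZMod m) a = 0)
    (h2 : ∃ k : ℤ, k • a = (m : ZMod N)) :
    CGraph.numCycles (Equiv.addLeft a) = m := by
  set f := ZMod.castHom hdvd (ZMod m) with hf
  have key : ∀ v w : ZMod N,
      (Equiv.addLeft a : Equiv.Perm (ZMod N)).SameCycle v w ↔ f v = f w := by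
    intro v w
    rw [sameCycle_addLeft]
    constructor
    · rintro ⟨n, rfl⟩
      simp [h1]
    · intro h
      have hz : f (w - v) = 0 := by rw [map_sub, h, sub_self]
      have hv : (((w - v).val : ℕ) : ZMod N) = w - v := ZMod.natCast_zmod_val _
      have hz' : (((w - v).val : ℕ) : ZMod m) = 0 := by
        rw [← map_natCast f, hv, hz]
      have hdvd' : m ∣ (w - v).val := (ZMod.natCast_eq_zero_iff _ _).mp hz'
      obtain ⟨t, ht⟩ := hdvd'
      obtain ⟨k, hk⟩ := h2
      refine ⟨(t : ℤ) * k, ?_⟩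
      have e1 : ((t : ℤ) * k) • a = (t : ℤ) • (k • a) := by rw [mul_smul]
      rw [e1, hk]
      have e2 : (t : ℤ) • ((m : ℕ) : ZMod N) = (((m * t : ℕ) : ZMod N)) := by
        rw [zsmul_eq_mul]
        push_cast
        ring
      rw [e2, ← ht, hv]
      abel
  have hwd : ∀ v w : ZMod N, (CGraph.cycleSetoid (Equiv.addLeft a)).r v w → f v = f w := by
    intro v w h
    exact (key v w).mp h
  let F : Quotient (CGraph.cycleSetoid (Equiv.addLeft a)) → ZMod m :=
    Quotient.lift f hwd
  have hbij : Function.Bijective F := by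
    constructor
    · refine Quotient.ind₂ ?_
      intro v w h
      exact Quotient.sound ((key v w).mpr h)
    · intro y
      refine ⟨Quotient.mk _ ((y.val : ℕ) : ZMod N), ?_⟩
      show f _ = y
      rw [map_natCast f, ZMod.natCast_zmod_val]
  rw [CGraph.numCycles, Nat.card_eq_of_bijective F hbij, Nat.card_zmod]

/-- The shifts defining our graph of genus `n`. -/
def myShift (n : ℕ) : Fin 3 → ZMod (4 * n + 2) :=
  ![0, ((1 : ℕ) : ZMod (4 * n + 2)), ((2 * n + 2 : ℕ) : ZMod (4 * n + 2))]

instance myNeZero (n : ℕ) : NeZero (4 * n + 2) := ⟨by omega⟩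

/-- The genus-`n` Feynman graph: `W = B = ZMod (4n+2)`, all `σ_c` are translations. -/
def myGraph (n : ℕ) : CGraph 3 where
  W := ZMod (4 * n + 2)
  B := ZMod (4 * n + 2)
  finW := by infer_instance
  finB := by infer_instance
  σ := fun c => Equiv.addLeft (myShift n c)

lemma myGraph_biperm (n : ℕ) (c d : Fin 3) :
    (myGraph n).biperm c d = Equiv.addLeft (myShift n c - myShift n d) := by
  refine Equiv.ext fun x : ZMod (4 * n + 2) => ?_
  have e : (myGraph n).biperm c d x
      = (Equiv.addLeft (myShift n d)).symm ((Equiv.addLeft (myShift n c)) x) := rfl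
  rw [e, Equiv.addLeft_symm]
  show _ = (myShift n c - myShift n d) + x
  simp only [Equiv.coe_addLeft]
  abel

end Aux

/-- For every integer `g ≥ 0` there exists a connected closed
3-colored graph (colors `{0,1,2}`) which is a Feynman graph of the quartic complex
matrix model and whose Euler characteristic equals `2 − 2g`. -/
theorem quartic_matrix_model_generates_all_genera :
    ∀ g : ℤ, 0 ≤ g →
      ∃ G : CGraph 3, G.Connected ∧ G.QuarticFeynman ∧ G.euler = 2 - 2 * g := by
  intro g hg
  obtain ⟨n, rfl⟩ := Int.eq_ofNat_of_zero_le hg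
  have s0 : myShift n 0 = 0 := rfl
  have s1 : myShift n 1 = ((1 : ℕ) : ZMod (4 * n + 2)) := rfl
  have s2 : myShift n 2 = ((2 * n + 2 : ℕ) : ZMod (4 * n + 2)) := rfl
  have hN : ((4 * n + 2 : ℕ) : ZMod (4 * n + 2)) = 0 := ZMod.natCast_self _
  have hN' := hN
  push_cast at hN'
  refine ⟨myGraph n, ?_, ?_, ?_⟩
  · -- Connected
    show ∀ v w : ZMod (4 * n + 2),
      ∃ π ∈ Subgroup.closure
        {π : Equiv.Perm (ZMod (4 * n + 2)) | ∃ c d : Fin 3, π = (myGraph n).biperm c d},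
        π v = w
    intro v w
    have hmem : (myGraph n).biperm 0 1 ∈
        {π : Equiv.Perm (ZMod (4 * n + 2)) | ∃ c d : Fin 3, π = (myGraph n).biperm c d} :=
      ⟨0, 1, rfl⟩
    refine ⟨((myGraph n).biperm 0 1)⁻¹ ^ (w - v).val,
      Subgroup.pow_mem _ (Subgroup.inv_mem _ (Subgroup.subset_closure hmem)) _, ?_⟩
    rw [myGraph_biperm, s0, s1]
    show ((Equiv.addLeft ((0 : ZMod (4 * n + 2)) - ((1 : ℕ) : ZMod (4 * n + 2))) :
      Equiv.Perm (ZMod (4 * n + 2)))⁻¹ ^ (w - v).val) v = w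
    simp only [Equiv.neg_addLeft, Equiv.nsmul_addLeft, Equiv.coe_addLeft]
    rw [nsmul_eq_mul, ZMod.natCast_zmod_val]
    push_cast
    ring
  · -- QuarticFeynman
    show ∀ v : ZMod (4 * n + 2),
      Nat.card {w : ZMod (4 * n + 2) // ((myGraph n).biperm 1 2).SameCycle v w} = 2
    intro v
    rw [myGraph_biperm, s1, s2]
    set h : ZMod (4 * n + 2) :=
      ((1 : ℕ) : ZMod (4 * n + 2)) - ((2 * n + 2 : ℕ) : ZMod (4 * n + 2)) with hh
    have h2h : h + h = 0 := by rw [hh]; push_cast; linear_combination -hN'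
    have hne : h ≠ 0 := by
      intro h0
      have : ((2 * n + 1 : ℕ) : ZMod (4 * n + 2)) = 0 := by
        rw [hh] at h0
        push_cast at h0 ⊢
        linear_combination -h0
      rw [ZMod.natCast_eq_zero_iff] at this
      have := Nat.le_of_dvd (by omega) this
      omega
    have hdich : ∀ k : ℤ, k • h = 0 ∨ k • h = h := by
      intro k
      rcases Int.even_or_odd k with ⟨q, hq⟩ | ⟨q, hq⟩
      · left
        subst hq
        rw [add_smul, ← smul_add, h2h, smul_zero]
      · right
        subst hq
        have e : (2 * q) • h = 0 := by
          rw [mul_comm (2 : ℤ) q, mul_smul, two_zsmul, h2h, smul_zero]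
        rw [add_smul, one_smul, e, zero_add]
    rw [Nat.card_eq_two_iff]
    refine ⟨⟨v, (sameCycle_addLeft h v v).mpr ⟨0, by rw [zero_smul, add_zero]⟩⟩,
      ⟨v + h, (sameCycle_addLeft h v (v + h)).mpr ⟨1, by rw [one_smul]⟩⟩, ?_, ?_⟩
    · intro hcon
      exact hne (left_eq_add.mp (congrArg Subtype.val hcon))
    · ext ⟨w, hw⟩
      simp only [Set.mem_insert_iff, Set.mem_singleton_iff, Set.mem_univ, iff_true]
      obtain ⟨k, hk⟩ := (sameCycle_addLeft h v w).mp hw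
      rcases hdich k with h0 | h0
      · left
        apply Subtype.ext
        show w = v
        rw [← hk, h0, add_zero]
      · right
        apply Subtype.ext
        show w = v + h
        rw [← hk, h0]
  · -- Euler characteristic
    have cardW : Nat.card (myGraph n).W = 4 * n + 2 := by
      show Nat.card (ZMod (4 * n + 2)) = 4 * n + 2
      exact Nat.card_zmod _
    have f01 : CGraph.numCycles ((myGraph n).biperm 0 1) = 1 := by
      rw [myGraph_biperm, s0, s1]
      exact numCycles_addLeft _ (one_dvd _) (Subsingleton.elim _ _)
        ⟨-1, by rw [zsmul_eq_mul]; push_cast; ring⟩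
    have f02 : CGraph.numCycles ((myGraph n).biperm 0 2) = 2 := by
      rw [myGraph_biperm, s0, s2]
      refine numCycles_addLeft _ ⟨2 * n + 1, by ring⟩ ?_ ⟨-2, ?_⟩
      · rw [map_sub, map_zero, map_natCast, zero_sub, neg_eq_zero,
          ZMod.natCast_eq_zero_iff]
        exact ⟨n + 1, by ring⟩
      · rw [zsmul_eq_mul]
        push_cast
        linear_combination hN'
    have f12 : CGraph.numCycles ((myGraph n).biperm 1 2) = 2 * n + 1 := by
      rw [myGraph_biperm, s1, s2]
      haveI : NeZero (2 * n + 1) := ⟨by omega⟩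
      refine numCycles_addLeft _ ⟨2, by ring⟩ ?_ ⟨-1, ?_⟩
      · rw [map_sub, map_natCast, map_natCast]
        have hM : ((2 * n + 1 : ℕ) : ZMod (2 * n + 1)) = 0 := ZMod.natCast_self _
        push_cast at hM ⊢
        linear_combination -hM
      · rw [zsmul_eq_mul]
        push_cast
        ring
    rw [CGraph.euler, CGraph.faces, cardW, f01, f02, f12]
    push_cast
    ring
end

section
/- For all integers g ≥ 0 and b ≥ 0 there exist a connected closed 3-colored graph G with colors {0,1,2} which is a Feynman graph of the quartic complex matrix model, with Euler characteristic χ(G) = 2 − 2g, and b pairwise distinct color-0 edges e₁, …, e_b of G, such that the boundary graph of the open graph obtained from G by deleting e₁, …, e_b has exactly b connected components, the i-th component consisting of the two endpoints of e_i joined by one edge of color 1 and one edge of color 2. (This is the combinatorial content of the theorem that the Feynman graphs of the quartic complex matrix model surject onto all orientable 2-dimensional bordisms: such a graph represents a genus-g bordism with b boundary circles.) -/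
/-!  Open colored graphs. -/

/-- An open `(D+1)`-colored graph with colors `{0,1,…,D}`: finite sets `W` (white) and
`B` (black) of vertices, bijections `σ c : W ≃ B` for the colors `c = 1,…,D` (indexed by
`Fin D`), and color-0 data: subsets `W₀ ⊆ W` and `B₀ ⊆ B` and a map `σ₀` which (for a
proper graph, see `OGraph.IsProper`) restricts to a bijection from `W₀` onto `B₀`; the
color-0 edges are the pairs `(w, σ₀ w)` with `w ∈ W₀`.  The vertices outside `W₀ ∪ B₀`
are the external vertices. -/
structure OGraph (D : ℕ) where
  W : Type
  B : Type
  finW : Finite W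
  finB : Finite B
  σ : Fin D → W ≃ B
  W₀ : Set W
  B₀ : Set B
  σ₀ : W → B

namespace OGraph

variable {D : ℕ}

/-- The color-0 data is a bijection from `W₀` onto `B₀`. -/
def IsProper (G : OGraph D) : Prop := Set.BijOn G.σ₀ G.W₀ G.B₀

/-- A closed graph is an open graph with no external vertices. -/
def IsClosed (G : OGraph D) : Prop := G.W₀ = Set.univ ∧ G.B₀ = Set.univ

/-- One step along a (0c)-bicolored path: from the white vertex `w` walk along the
color-`c` edge to `σ_c w` and then back along a color-0 edge to the white vertex `w'`. -/
def Step (G : OGraph D) (c : Fin D) (w w' : G.W) : Prop :=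
  w' ∈ G.W₀ ∧ G.σ c w ∈ G.B₀ ∧ G.σ₀ w' = G.σ c w

/-- Boundary adjacency (the color-`c` edges of the boundary graph `∂G`): the external
vertices `w` and `b` are the two endpoints of a maximal (0c)-bicolored path of `G`. -/
def BdryAdj (G : OGraph D) (c : Fin D) (w : G.W) (b : G.B) : Prop :=
  w ∉ G.W₀ ∧ b ∉ G.B₀ ∧
    ∃ w' : G.W, Relation.ReflTransGen (G.Step c) w w' ∧ G.σ c w' = b

/-- Adjacency of vertices of an open colored graph (an edge of any color joins them). -/
def Adj (G : OGraph D) : G.W ⊕ G.B → G.W ⊕ G.B → Prop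
  | Sum.inl w, Sum.inr b => (∃ c, G.σ c w = b) ∨ (w ∈ G.W₀ ∧ G.σ₀ w = b)
  | Sum.inr b, Sum.inl w => (∃ c, G.σ c w = b) ∨ (w ∈ G.W₀ ∧ G.σ₀ w = b)
  | Sum.inl _, Sum.inl _ => False
  | Sum.inr _, Sum.inr _ => False

/-- A graph is connected if any two of its vertices are joined by a path of edges. -/
def Connected (G : OGraph D) : Prop :=
  ∀ x y : G.W ⊕ G.B, Relation.ReflTransGen G.Adj x y

/-- An open 4-colored graph (colors `{0,1,2,3}`; the colors `1,2,3` are indexed by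
`Fin 3`) is a Feynman graph of the φ₃⁴-theory iff every connected component of the
3-colored graph obtained by deleting all color-0 edges is one of the quartic vertices
`V₁, V₂, V₃`: the white vertices pair up, `w` with a partner `w' ≠ w`, so that for some
color `i` the two edges at `w` of the colors `j ≠ i` end at the same black vertex as the
color-`i` edge of `w'`, and vice versa. -/
def Phi34 (G : OGraph 3) : Prop :=
  ∀ w : G.W, ∃ i : Fin 3, ∃ w' : G.W, w' ≠ w ∧
    (∀ j : Fin 3, j ≠ i → G.σ j w = G.σ i w') ∧
    (∀ j : Fin 3, j ≠ i → G.σ j w' = G.σ i w)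

/-- Connected sum of two open `(D+1)`-colored graphs along the color-0 edges
`(wg, σ₀ wg)` of `G` and `(wh, σ₀ wh)` of `H`: delete the two edges and add the color-0
edges `(wg, H.σ₀ wh)` and `(wh, G.σ₀ wg)`; all other edges are kept. -/
noncomputable def connSum0 (G H : OGraph D) (wg : G.W) (wh : H.W) : OGraph D where
  W := G.W ⊕ H.W
  B := G.B ⊕ H.B
  finW := by haveI := G.finW; haveI := H.finW; exact inferInstance
  finB := by haveI := G.finB; haveI := H.finB; exact inferInstance
  σ := fun c => (G.σ c).sumCongr (H.σ c)
  W₀ := Sum.inl '' G.W₀ ∪ Sum.inr '' H.W₀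
  B₀ := Sum.inl '' G.B₀ ∪ Sum.inr '' H.B₀
  σ₀ := fun x =>
    letI : DecidableEq (G.W ⊕ H.W) := Classical.decEq _
    if x = Sum.inl wg then Sum.inr (H.σ₀ wh)
    else if x = Sum.inr wh then Sum.inl (G.σ₀ wg)
    else Sum.map G.σ₀ H.σ₀ x

end OGraph

/-- The open 3-colored graph (colors `{0,1,2}`, the nonzero colors `1,2` indexed by
`Fin 2` via `c ↦ c+1`) obtained from a closed 3-colored graph `G` by deleting the
color-0 edges `e_i = (v i, σ₀ (v i))`, `i = 1,…,b`; their endpoints become external. -/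
def CGraph.deleteZero (G : CGraph 3) {b : ℕ} (v : Fin b → G.W) : OGraph 2 where
  W := G.W
  B := G.B
  finW := G.finW
  finB := G.finB
  σ := fun c => G.σ c.succ
  W₀ := (Set.range v)ᶜ
  B₀ := (Set.range fun i => G.σ 0 (v i))ᶜ
  σ₀ := fun w => G.σ 0 w

/-! Auxiliary material for the proof. -/

open CGraph in
theorem numCycles_label {α I : Type*} (π : Equiv.Perm α) (f : α → I)
    (h1 : ∀ x, f (π x) = f x)
    (h2 : ∀ x y, f x = f y → π.SameCycle x y)
    (h3 : Function.Surjective f) :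
    numCycles π = Nat.card I := by
  have hn : ∀ (n : ℕ) (x : α), f ((π ^ n) x) = f x := by
    intro n
    induction n with
    | zero => intro x; rfl
    | succ n ih =>
      intro x
      have : (π ^ (n+1)) x = (π ^ n) (π x) := by rw [pow_succ]; rfl
      rw [this, ih, h1]
  have hz : ∀ (z : ℤ) (x : α), f ((π ^ z) x) = f x := by
    intro z x
    cases z with
    | ofNat n => simpa using hn n x
    | negSucc n =>
      rw [zpow_negSucc]
      have := hn (n+1) ((π ^ (n+1))⁻¹ x)
      simpa using this.symm
  have key : ∀ a b : α, π.SameCycle a b → f a = f b := by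
    rintro a b ⟨z, rfl⟩
    exact (hz z a).symm
  have e : Quotient (cycleSetoid π) ≃ I := by
    refine Equiv.ofBijective (Quotient.lift f (fun a b h => key a b h)) ⟨?_, ?_⟩
    · rintro ⟨a⟩ ⟨b⟩ h
      exact Quotient.sound (h2 a b h)
    · intro i
      obtain ⟨x, rfl⟩ := h3 i
      exact ⟨⟦x⟧, rfl⟩
  rw [numCycles, Nat.card_congr e]

/-- Deleting color-0 edges from a closed graph always yields a proper open graph. -/
theorem deleteZero_isProper (G : CGraph 3) {b : ℕ} (v : Fin b → G.W) :
    (G.deleteZero v).IsProper := by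
  refine ⟨?_, ?_, ?_⟩
  · rintro w hw ⟨i, hi⟩
    exact hw ⟨i, (G.σ 0).injective hi⟩
  · intro w _ w' _ h
    exact (G.σ 0).injective h
  · rintro x hx
    refine ⟨(G.σ 0).symm x, ?_, by simp [CGraph.deleteZero]; exact (G.σ 0).apply_symm_apply x⟩
    rintro ⟨i, hi⟩
    exact hx ⟨i, by simp [hi, CGraph.deleteZero]; exact (G.σ 0).apply_symm_apply x⟩
namespace BordismCon

lemma z2 (a : ZMod 2) : a + 1 + 1 = a := by revert a; decide
lemma z2ne (a : ZMod 2) : a + 1 ≠ a := by revert a; decide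
lemma z2cases (a : ZMod 2) : a = 0 ∨ a = 1 := by revert a; decide

abbrev Yty (m k : ℕ) : Type := (ZMod (m+1) × ZMod 2) ⊕ ZMod (2*k+1)
abbrev Wty (m k : ℕ) : Type := ZMod 2 × Yty m k

variable {m k : ℕ}

def flipE (m k : ℕ) : Equiv.Perm (Wty m k) where
  toFun x := (x.1 + 1, x.2)
  invFun x := (x.1 + 1, x.2)
  left_inv := by rintro ⟨e, y⟩; simp [z2]
  right_inv := by rintro ⟨e, y⟩; simp [z2]

def cc (m : ℕ) (ε t : ZMod 2) : ZMod (m+1) := if ε = 1 ∧ t = 0 then 1 else 0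

def baseE (m k : ℕ) : Equiv.Perm (Wty m k) where
  toFun x := match x with
    | (ε, .inl (i, t)) => (ε + 1, .inl (i + cc m ε t, t + 1))
    | (ε, .inr y) => (ε + 1, .inr (y + 1))
  invFun x := match x with
    | (ε, .inl (i, t)) => (ε + 1, .inl (i - cc m (ε + 1) (t + 1), t + 1))
    | (ε, .inr y) => (ε + 1, .inr (y - 1))
  left_inv := by rintro ⟨ε, (⟨i, t⟩ | y)⟩ <;> simp [z2]
  right_inv := by rintro ⟨ε, (⟨i, t⟩ | y)⟩ <;> simp [z2]

def Apt (m k : ℕ) : Wty m k := ((0 : ZMod 2), .inl (0, 1))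
def Bpt (m k : ℕ) : Wty m k := ((0 : ZMod 2), .inr 0)

def sig0 (m k : ℕ) : Equiv.Perm (Wty m k) :=
  (baseE m k).trans (Equiv.swap (Apt m k) (Bpt m k))

lemma z2b : (1:ZMod 2) + 1 = 0 := by decide

lemma s1 (i : ZMod (m+1)) : sig0 m k (0, .inl (i, 0)) = (1, .inl (i, 1)) := by
  simp [sig0, baseE, cc, Equiv.swap_apply_of_ne_of_ne, Apt, Bpt, z2b]
lemma s2 (i : ZMod (m+1)) : sig0 m k (1, .inl (i, 1)) = (0, .inl (i, 0)) := by
  simp [sig0, baseE, cc, Equiv.swap_apply_of_ne_of_ne, Apt, Bpt, z2b]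

lemma s3 (i : ZMod (m+1)) : sig0 m k (0, .inl (i, 1)) = (1, .inl (i, 0)) := by
  simp [sig0, baseE, cc, Equiv.swap_apply_of_ne_of_ne, Apt, Bpt, z2b]

lemma s4 (i : ZMod (m+1)) (h : i ≠ -1) :
    sig0 m k (1, .inl (i, 0)) = (0, .inl (i + 1, 1)) := by
  have h1 : i + 1 ≠ 0 := fun hc => h (by linear_combination (norm := ring_nf) hc)
  simp [sig0, baseE, cc, Apt, Bpt, z2b]
  rw [Equiv.swap_apply_of_ne_of_ne] <;> simp [Apt, Bpt, h1]

lemma s4' : sig0 m k (1, .inl (-1, 0)) = Bpt m k := by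
  have : (baseE m k) (1, .inl (-1, 0)) = Apt m k := by
    simp [baseE, cc, Apt, z2b]
  simp [sig0, this]

lemma s5 (y : ZMod (2*k+1)) : sig0 m k (0, .inr y) = (1, .inr (y + 1)) := by
  simp [sig0, baseE, Equiv.swap_apply_of_ne_of_ne, Apt, Bpt, z2b]

lemma s6 (y : ZMod (2*k+1)) (h : y ≠ -1) :
    sig0 m k (1, .inr y) = (0, .inr (y + 1)) := by
  have h1 : y + 1 ≠ 0 := fun hc => h (by linear_combination (norm := ring_nf) hc)
  simp [sig0, baseE, cc, Apt, Bpt, z2b]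
  rw [Equiv.swap_apply_of_ne_of_ne] <;> simp [Apt, Bpt, h1]

lemma s6' : sig0 m k (1, .inr (-1)) = Apt m k := by
  have : (baseE m k) (1, .inr (-1)) = Bpt m k := by
    simp [baseE, Bpt, z2b]
  simp [sig0, this]


def Gr (m k : ℕ) : CGraph 3 where
  W := Wty m k
  B := Wty m k
  finW := inferInstance
  finB := inferInstance
  σ := fun c => match c with
    | 0 => sig0 m k
    | 1 => Equiv.refl _
    | 2 => flipE m k

lemma bip01 : (Gr m k).biperm 0 1 = sig0 m k := by
  ext x; rfl

lemma bip02_apply (x : (Gr m k).W) :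
    (Gr m k).biperm 0 2 x = ((sig0 m k x).1 + 1, (sig0 m k x).2) := rfl

lemma bip12_apply (x : (Gr m k).W) :
    (Gr m k).biperm 1 2 x = (x.1 + 1, x.2) := rfl

end BordismCon
namespace BordismCon
variable {m k : ℕ}

lemma z2reach (a b : ZMod 2) (h : a ≠ b) : a + 1 = b := by revert a b; decide

lemma count12 :
    CGraph.numCycles ((Gr m k).biperm 1 2) = 2 * (m + 1) + (2 * k + 1) := by
  rw [numCycles_label (α := (Gr m k).W) _ (Prod.snd : Wty m k → Yty m k)]
  · rw [Nat.card_eq_fintype_card]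
    simp [Fintype.card_sum, Fintype.card_prod, ZMod.card]
    ring
  · intro x; rfl
  · rintro ⟨e1, y1⟩ ⟨e2, y2⟩ h
    dsimp at h
    subst h
    rcases eq_or_ne e1 e2 with rfl | hne
    · exact ⟨0, rfl⟩
    · refine ⟨1, ?_⟩
      rw [zpow_one]
      exact Prod.ext (z2reach _ _ hne) rfl
  · intro y; exact ⟨(0, y), rfl⟩

lemma quartic : (Gr m k).QuarticFeynman := by
  intro x
  set π := (Gr m k).biperm 1 2 with hπ
  have happ : ∀ z : Wty m k, π z = (z.1 + 1, z.2) := fun _ => rfl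
  have hsq : π ^ (2 : ℤ) = 1 := by
    ext z
    show π (π z) = z
    erw [happ, happ]
    exact Prod.ext (z2 _) rfl
  have hzpow : ∀ z : ℤ, π ^ z = 1 ∨ π ^ z = π := by
    intro z
    have hd : π ^ z = (π ^ (2:ℤ)) ^ (z / 2) * π ^ (z % 2) := by
      rw [← zpow_mul, ← zpow_add]; congr 1; omega
    rcases Int.emod_two_eq z with h | h <;> rw [h] at hd <;>
      simp [hsq, one_zpow] at hd
    · left; simpa using hd
    · right; simpa using hd
  have hchar : ∀ w, π.SameCycle x w ↔ w = x ∨ w = π x := by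
    intro w
    constructor
    · rintro ⟨z, rfl⟩
      rcases hzpow z with h | h <;> rw [h] <;> simp
    · rintro (rfl | rfl)
      exacts [⟨0, rfl⟩, ⟨1, by simp⟩]
  have hset : {w | π.SameCycle x w} = {x, π x} := by
    ext w; simp [hchar w, Set.mem_insert_iff]
  show Nat.card {w // π.SameCycle x w} = 2
  have hcard : Nat.card {w // π.SameCycle x w} = ({x, π x} : Set (Wty m k)).ncard := by
    rw [← Nat.card_coe_set_eq]; exact congrArg (fun s : Set (Wty m k) => Nat.card s) hset
  rw [hcard]; refine Set.ncard_pair (α := Wty m k) ?_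
  intro hc
  have hc1 : x.1 + 1 = x.1 := ((congrArg Prod.fst hc).symm : (π x).1 = x.1)
  exact z2ne x.1 hc1

end BordismCon
namespace BordismCon
variable {m k : ℕ}

lemma perm_pow_succ {α : Type*} (π : Equiv.Perm α) (n : ℕ) (x : α) :
    (π ^ (n+1)) x = π ((π ^ n) x) := by
  rw [pow_succ']; rfl

lemma cast_ne_neg_one {n : ℕ} (j : ℕ) (hj : j < n) : ((j:ℕ) : ZMod (n+1)) ≠ -1 := by
  intro hc
  have h0 : ((j+1 : ℕ) : ZMod (n+1)) = 0 := by push_cast [hc]; ring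
  rw [ZMod.natCast_eq_zero_iff] at h0
  have := Nat.le_of_dvd (by omega) h0
  omega

lemma core_ne (j : ℕ) (hj : j ≤ 4*k) (hpar : ((j:ℕ) : ZMod 2) = 1) :
    ((j:ℕ) : ZMod (2*k+1)) ≠ -1 := by
  intro hc
  have h0 : ((j+1 : ℕ) : ZMod (2*k+1)) = 0 := by push_cast [hc]; ring
  rw [ZMod.natCast_eq_zero_iff] at h0
  obtain ⟨c, hcc⟩ := h0
  have hj2 : j = 2*k := by
    rcases c with _|_|c
    · omega
    · omega
    · have h2 : (2*k+1)*2 ≤ (2*k+1)*(c+1+1) := Nat.mul_le_mul_left _ (by omega)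
      omega
  subst hj2
  rw [show ((2*k : ℕ) : ZMod 2) = 0 by
    rw [Nat.cast_mul, show ((2:ℕ) : ZMod 2) = 0 by decide, zero_mul]] at hpar
  exact absurd hpar (by decide)

lemma L1core (j : ℕ) (hj : j ≤ 4*k+1) :
    ((sig0 m k) ^ j) (Bpt m k) = ((j : ZMod 2), .inr (j : ZMod (2*k+1))) := by
  induction j with
  | zero => simp [Bpt]
  | succ j ih =>
    rw [perm_pow_succ, ih (by omega)]
    rcases z2cases ((j : ℕ) : ZMod 2) with h | h
    · rw [h, s5]; push_cast; simp [h]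
    · rw [h, s6 _ (core_ne j (by omega) h)]; push_cast; simp [h, z2b]

lemma L2 : ((sig0 m k) ^ (4*k+2)) (Bpt m k) = Apt m k := by
  rw [show 4*k+2 = (4*k+1)+1 by ring, perm_pow_succ, L1core (4*k+1) le_rfl]
  have h2 : ((4*k+1 : ℕ) : ZMod 2) = 1 := by
    push_cast
    rw [show (4 : ZMod 2) = 0 by decide]
    ring
  have h3 : ((4*k+1 : ℕ) : ZMod (2*k+1)) = -1 := by
    have h0 : ((2*k+1 : ℕ) : ZMod (2*k+1)) = 0 := ZMod.natCast_self _
    push_cast at h0 ⊢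
    linear_combination 2*h0
  rw [h2, h3, s6']

lemma L3 (j : ℕ) (hj : j ≤ m) :
    ((sig0 m k) ^ (4*k+2+2*j)) (Bpt m k) = (0, .inl ((j : ZMod (m+1)), 1)) := by
  induction j with
  | zero => simpa [Apt] using L2 (m := m) (k := k)
  | succ j ih =>
    rw [show 4*k+2+2*(j+1) = ((4*k+2+2*j)+1)+1 by ring, perm_pow_succ, perm_pow_succ,
      ih (by omega), s3, s4 _ (cast_ne_neg_one j (by omega))]
    push_cast
    rfl

lemma L3' (j : ℕ) (hj : j ≤ m) :
    ((sig0 m k) ^ (4*k+3+2*j)) (Bpt m k) = (1, .inl ((j : ZMod (m+1)), 0)) := by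
  rw [show 4*k+3+2*j = (4*k+2+2*j)+1 by ring, perm_pow_succ, L3 j hj, s3]

def f01 : Wty m k → Option (ZMod (m+1)) := fun x => match x with
  | (ε, .inl (i, t)) => if t = ε then some i else none
  | (_, .inr _) => none

lemma trace01 (x : Wty m k) (hx : f01 x = none) :
    (sig0 m k).SameCycle (Bpt m k) x := by
  obtain ⟨ε, (⟨i,t⟩|y)⟩ := x
  · have hne : t ≠ ε := by
      intro h; rw [f01, h] at hx; simp at hx
    rcases z2cases ε with rfl | rfl
    · have ht : t = 1 := by
        rcases z2cases t with rfl|rfl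
        exacts [absurd rfl hne, rfl]
      subst ht
      refine ⟨(4*k+2+2*i.val : ℕ), ?_⟩
      rw [zpow_natCast, L3 i.val (by have := ZMod.val_lt i; omega), ZMod.natCast_zmod_val]
    · have ht : t = 0 := by
        rcases z2cases t with rfl|rfl
        exacts [rfl, absurd rfl hne]
      subst ht
      refine ⟨(4*k+3+2*i.val : ℕ), ?_⟩
      rw [zpow_natCast, L3' i.val (by have := ZMod.val_lt i; omega), ZMod.natCast_zmod_val]
  · have ha : y.val < 2*k+1 := ZMod.val_lt y
    by_cases hp : ((y.val : ℕ) : ZMod 2) = ε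
    · refine ⟨(y.val : ℕ), ?_⟩
      rw [zpow_natCast, L1core y.val (by omega), hp, ZMod.natCast_zmod_val]
    · refine ⟨(y.val + (2*k+1) : ℕ), ?_⟩
      rw [zpow_natCast, L1core _ (by omega)]
      have hv : ((2*k+1 : ℕ) : ZMod 2) = 1 := by
        rw [Nat.cast_add, Nat.cast_mul, show ((2:ℕ) : ZMod 2) = 0 by decide,
          zero_mul, zero_add, Nat.cast_one]
      have e1 : ((y.val + (2*k+1) : ℕ) : ZMod 2) = ε := by
        rw [Nat.cast_add, hv]
        exact z2reach _ _ hp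
      have e2 : ((y.val + (2*k+1) : ℕ) : ZMod (2*k+1)) = y := by
        rw [Nat.cast_add, ZMod.natCast_self, add_zero, ZMod.natCast_zmod_val]
      rw [e1, e2]

end BordismCon
namespace BordismCon
variable {m k : ℕ}

lemma zne01 : (0 : ZMod 2) ≠ 1 := by decide
lemma zne10 : (1 : ZMod 2) ≠ 0 := by decide

lemma f01_inv (x : Wty m k) : f01 (sig0 m k x) = f01 x := by
  obtain ⟨ε, (⟨i,t⟩|y)⟩ := x
  · rcases z2cases ε with rfl | rfl <;> rcases z2cases t with rfl | rfl
    · rw [s1]; simp [f01]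
    · rw [s3]; simp [f01, zne01, zne10]
    · rcases eq_or_ne i (-1) with rfl | hi
      · rw [s4']; simp [f01, Bpt, zne01, zne10]
      · rw [s4 _ hi]; simp [f01, zne01, zne10]
    · rw [s2]; simp [f01]
  · rcases z2cases ε with rfl | rfl
    · rw [s5]; simp [f01]
    · rcases eq_or_ne y (-1) with rfl | hy
      · rw [s6']; simp [f01, Apt, zne01, zne10]
      · rw [s6 _ hy]; simp [f01]

lemma f01_some (x : Wty m k) (i : ZMod (m+1)) (h : f01 x = some i) :
    x = (0, .inl (i,0)) ∨ x = (1, .inl (i,1)) := by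
  obtain ⟨ε, (⟨i',t⟩|y)⟩ := x
  · rcases z2cases ε with rfl | rfl <;> rcases z2cases t with rfl | rfl <;>
      simp [f01, zne01, zne10] at h <;> subst h
    · exact Or.inl rfl
    · exact Or.inr rfl
  · simp [f01] at h

lemma count01 : CGraph.numCycles ((Gr m k).biperm 0 1) = m + 2 := by
  rw [bip01, numCycles_label (α := (Gr m k).W) (sig0 m k) f01 f01_inv ?h2 ?h3]
  · rw [Nat.card_eq_fintype_card]
    simp [ZMod.card]
  case h2 =>
    intro x y h
    match hx : f01 x with
    | none =>
      have hy : f01 y = none := by rw [← h, hx]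
      exact ((trace01 x hx).symm).trans (trace01 y hy)
    | some i =>
      have hy : f01 y = some i := by rw [← h, hx]
      have hstep : (sig0 m k).SameCycle (0, .inl (i,0)) (1, .inl (i,1)) :=
        ⟨1, by rw [zpow_one, s1]⟩
      rcases f01_some x i hx with rfl | rfl <;> rcases f01_some y i hy with rfl | rfl
      · exact ⟨0, rfl⟩
      · exact hstep
      · exact hstep.symm
      · exact ⟨0, rfl⟩
  case h3 =>
    intro o
    match o with
    | none => exact ⟨Bpt m k, rfl⟩
    | some i => exact ⟨(0, .inl (i,0)), by simp [f01]⟩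

end BordismCon
namespace BordismCon
variable {m k : ℕ}

def pi02 (m k : ℕ) : Equiv.Perm (Wty m k) := (Gr m k).biperm 0 2

lemma pi02_eval (x y : Wty m k) (h : sig0 m k x = y) :
    pi02 m k x = (y.1 + 1, y.2) := by rw [← h]; rfl

lemma p1 (i : ZMod (m+1)) : pi02 m k (0, .inl (i,0)) = (0, .inl (i,1)) := by
  rw [pi02_eval _ _ (s1 i)]; exact Prod.ext z2b rfl

lemma p2 (i : ZMod (m+1)) : pi02 m k (0, .inl (i,1)) = (0, .inl (i,0)) := by
  rw [pi02_eval _ _ (s3 i)]; exact Prod.ext z2b rfl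

lemma p3 (i : ZMod (m+1)) : pi02 m k (1, .inl (i,1)) = (1, .inl (i,0)) := by
  rw [pi02_eval _ _ (s2 i)]; exact Prod.ext (zero_add 1) rfl

lemma p4 (i : ZMod (m+1)) (h : i ≠ -1) :
    pi02 m k (1, .inl (i,0)) = (1, .inl (i+1,1)) := by
  rw [pi02_eval _ _ (s4 i h)]; exact Prod.ext (zero_add 1) rfl

lemma p4' : pi02 m k (1, .inl (-1,0)) = (1, .inr 0) := by
  rw [pi02_eval _ _ s4']; exact Prod.ext (zero_add 1) rfl

lemma p5 (y : ZMod (2*k+1)) : pi02 m k (0, .inr y) = (0, .inr (y+1)) := by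
  rw [pi02_eval _ _ (s5 y)]; exact Prod.ext z2b rfl

lemma p6 (y : ZMod (2*k+1)) (h : y ≠ -1) :
    pi02 m k (1, .inr y) = (1, .inr (y+1)) := by
  rw [pi02_eval _ _ (s6 y h)]; exact Prod.ext (zero_add 1) rfl

lemma p6' : pi02 m k (1, .inr (-1)) = (1, .inl (0,1)) := by
  rw [pi02_eval _ _ s6']; exact Prod.ext (zero_add 1) rfl

def f02 : Wty m k → Option (Option (ZMod (m+1))) := fun x =>
  if x.1 = 0 then
    match x.2 with
    | .inl (i, _) => some (some i)
    | .inr _ => some none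
  else none

lemma f02_inv (x : Wty m k) : f02 (pi02 m k x) = f02 x := by
  obtain ⟨ε, (⟨i,t⟩|y)⟩ := x
  · rcases z2cases ε with rfl | rfl <;> rcases z2cases t with rfl | rfl
    · rw [p1]; simp [f02]
    · rw [p2]; simp [f02]
    · rcases eq_or_ne i (-1) with rfl | hi
      · rw [p4']; simp [f02, zne10]
      · rw [p4 _ hi]; simp [f02, zne10]
    · rw [p3]; simp [f02, zne10]
  · rcases z2cases ε with rfl | rfl
    · rw [p5]; simp [f02]
    · rcases eq_or_ne y (-1) with rfl | hy
      · rw [p6']; simp [f02, zne10]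
      · rw [p6 _ hy]; simp [f02, zne10]

lemma M1 (j : ℕ) (y : ZMod (2*k+1)) :
    ((pi02 m k) ^ j) (0, .inr y) = (0, .inr (y + j)) := by
  induction j with
  | zero => simp
  | succ j ih =>
    rw [perm_pow_succ, ih, p5]
    refine Prod.ext rfl (congrArg _ ?_)
    push_cast
    ring

def z0 (m k : ℕ) : Wty m k := ((1 : ZMod 2), .inl (0,1))

lemma N1 (j : ℕ) (hj : j ≤ m) :
    ((pi02 m k) ^ (2*j)) (z0 m k) = (1, .inl ((j : ZMod (m+1)), 1)) ∧
    ((pi02 m k) ^ (2*j+1)) (z0 m k) = (1, .inl ((j : ZMod (m+1)), 0)) := by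
  induction j with
  | zero =>
    constructor
    · simp [z0]
    · rw [show 2*0+1 = 0+1 from rfl, pow_one]
      simpa [z0] using p3 (0 : ZMod (m+1))
  | succ j ih =>
    obtain ⟨ih1, ih2⟩ := ih (by omega)
    have he : ((pi02 m k) ^ (2*(j+1))) (z0 m k) = (1, .inl (((j+1 : ℕ) : ZMod (m+1)), 1)) := by
      rw [show 2*(j+1) = (2*j+1)+1 by ring, perm_pow_succ, ih2,
        p4 _ (cast_ne_neg_one j (by omega))]
      push_cast
      rfl
    refine ⟨he, ?_⟩
    rw [show 2*(j+1)+1 = (2*(j+1))+1 by ring, perm_pow_succ, he, p3]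

lemma N2 : ((pi02 m k) ^ (2*m+2)) (z0 m k) = (1, .inr 0) := by
  have hm : ((m : ℕ) : ZMod (m+1)) = -1 := by
    have h0 : ((m+1 : ℕ) : ZMod (m+1)) = 0 := ZMod.natCast_self _
    push_cast at h0
    linear_combination h0
  rw [show 2*m+2 = (2*m+1)+1 by ring, perm_pow_succ, (N1 m le_rfl).2, hm, p4']

lemma N3 (j : ℕ) (hj : j ≤ 2*k) :
    ((pi02 m k) ^ (2*m+2+j)) (z0 m k) = (1, .inr ((j : ℕ) : ZMod (2*k+1))) := by
  induction j with
  | zero => simpa using N2 (m := m) (k := k)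
  | succ j ih =>
    rw [show 2*m+2+(j+1) = (2*m+2+j)+1 by ring, perm_pow_succ, ih (by omega),
      p6 _ (cast_ne_neg_one j (by omega))]
    push_cast
    rfl

lemma trace02 (x : Wty m k) (hx : f02 x = none) :
    (pi02 m k).SameCycle (z0 m k) x := by
  obtain ⟨ε, xy⟩ := x
  have he : ε = 1 := by
    rcases z2cases ε with rfl | rfl
    · rw [f02] at hx; simp at hx
      rcases xy with ⟨i,t⟩ | y <;> simp at hx
    · rfl
  subst he
  rcases xy with ⟨i,t⟩ | y
  · rcases z2cases t with rfl | rfl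
    · refine ⟨(2*i.val+1 : ℕ), ?_⟩
      rw [zpow_natCast, (N1 i.val (by have := ZMod.val_lt i; omega)).2, ZMod.natCast_zmod_val]
    · refine ⟨(2*i.val : ℕ), ?_⟩
      rw [zpow_natCast, (N1 i.val (by have := ZMod.val_lt i; omega)).1, ZMod.natCast_zmod_val]
  · refine ⟨(2*m+2+y.val : ℕ), ?_⟩
    rw [zpow_natCast, N3 y.val (by have := ZMod.val_lt y; omega), ZMod.natCast_zmod_val]

lemma f02_some_none (x : Wty m k) (h : f02 x = some none) : ∃ y, x = (0, .inr y) := by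
  obtain ⟨ε, (⟨i,t⟩|y)⟩ := x
  · rcases z2cases ε with rfl | rfl <;> simp [f02, zne10] at h
  · rcases z2cases ε with rfl | rfl
    · exact ⟨y, rfl⟩
    · simp [f02, zne10] at h

lemma f02_some_some (x : Wty m k) (i : ZMod (m+1)) (h : f02 x = some (some i)) :
    x = (0, .inl (i,0)) ∨ x = (0, .inl (i,1)) := by
  obtain ⟨ε, (⟨i',t⟩|y)⟩ := x
  · rcases z2cases ε with rfl | rfl
    · simp [f02] at h
      subst h
      rcases z2cases t with rfl | rfl
      · exact Or.inl rfl
      · exact Or.inr rfl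
    · simp [f02, zne10] at h
  · rcases z2cases ε with rfl | rfl <;> simp [f02, zne10] at h

lemma count02 : CGraph.numCycles ((Gr m k).biperm 0 2) = m + 3 := by
  rw [show (Gr m k).biperm 0 2 = pi02 m k from rfl,
    numCycles_label (α := (Gr m k).W) (pi02 m k) f02 f02_inv ?h2 ?h3]
  · rw [Nat.card_eq_fintype_card]
    simp [ZMod.card]
  case h2 =>
    intro x y h
    match hx : f02 x with
    | none =>
      have hy : f02 y = none := by rw [← h, hx]
      exact ((trace02 x hx).symm).trans (trace02 y hy)
    | some none =>
      have hy : f02 y = some none := by rw [← h, hx]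
      obtain ⟨y1, rfl⟩ := f02_some_none x hx
      obtain ⟨y2, rfl⟩ := f02_some_none y hy
      refine ⟨((y2 - y1).val : ℕ), ?_⟩
      show ((pi02 m k : Equiv.Perm (Wty m k)) ^ (((y2 - y1).val : ℕ) : ℤ)) ((0 : ZMod 2), Sum.inr y1) = ((0 : ZMod 2), Sum.inr y2)
      rw [zpow_natCast, M1]
      refine Prod.ext rfl (congrArg _ ?_)
      rw [ZMod.natCast_zmod_val]
      ring
    | some (some i) =>
      have hy : f02 y = some (some i) := by rw [← h, hx]
      have hstep : (pi02 m k).SameCycle (0, .inl (i,0)) ((0 : ZMod 2), .inl (i,1)) :=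
        ⟨1, by rw [zpow_one, p1]⟩
      rcases f02_some_some x i hx with rfl | rfl <;>
        rcases f02_some_some y i hy with rfl | rfl
      · exact ⟨0, rfl⟩
      · exact hstep
      · exact hstep.symm
      · exact ⟨0, rfl⟩
  case h3 =>
    intro o
    match o with
    | none => exact ⟨z0 m k, rfl⟩
    | some none => exact ⟨(0, .inr 0), rfl⟩
    | some (some i) => exact ⟨(0, .inl (i,0)), rfl⟩

end BordismCon
namespace BordismCon
variable {m k : ℕ}

lemma euler_Gr : (Gr m k).euler = 2 - 2*(k : ℤ) := by
  have hW : Nat.card (Gr m k).W = 4*m + 4*k + 6 := by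
    show Nat.card (Wty m k) = _
    rw [Nat.card_eq_fintype_card]
    simp [ZMod.card]
    ring
  rw [CGraph.euler, CGraph.faces, count01, count02, count12, hW]
  push_cast
  ring

lemma conn : (Gr m k).Connected := by
  intro v w
  set S : Set (Equiv.Perm (Gr m k).W) :=
    {π | ∃ c d : Fin 3, π = (Gr m k).biperm c d} with hS
  have hs : sig0 m k ∈ Subgroup.closure S :=
    Subgroup.subset_closure ⟨0, 1, bip01.symm⟩
  have hf : flipE m k ∈ Subgroup.closure S :=
    Subgroup.subset_closure ⟨2, 1, Equiv.ext fun x => rfl⟩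
  have reach : ∀ x : Wty m k, ∃ π ∈ Subgroup.closure S, π (Bpt m k) = x := by
    intro x
    match hx : f01 x with
    | none =>
      obtain ⟨z, hz⟩ := trace01 x hx
      exact ⟨sig0 m k ^ z, zpow_mem hs z, hz⟩
    | some i =>
      rcases f01_some x i hx with rfl | rfl
      · obtain ⟨z, hz⟩ := trace01 (m := m) (k := k) ((1:ZMod 2), .inl (i,0)) (by simp [f01, zne01])
        refine ⟨flipE m k * sig0 m k ^ z, mul_mem hf (zpow_mem hs z), ?_⟩
        exact (congrArg (flipE m k) hz).trans (Prod.ext z2b rfl)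
      · obtain ⟨z, hz⟩ := trace01 (m := m) (k := k) ((0:ZMod 2), .inl (i,1)) (by simp [f01, zne10])
        refine ⟨flipE m k * sig0 m k ^ z, mul_mem hf (zpow_mem hs z), ?_⟩
        exact (congrArg (flipE m k) hz).trans (Prod.ext (zero_add 1) rfl)
  obtain ⟨πv, hv1, hv2⟩ := reach v
  obtain ⟨πw, hw1, hw2⟩ := reach w
  refine ⟨πw * πv⁻¹, mul_mem hw1 (inv_mem hv1), ?_⟩
  rw [Equiv.Perm.mul_apply, ← hv2, Equiv.Perm.coe_inv]; exact (congrArg πw (πv.symm_apply_apply (Bpt m k))).trans hw2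

end BordismCon
namespace BordismCon
variable {m k : ℕ}

def vm (m k : ℕ) : Fin (m+1) → Wty m k := fun i => (0, .inl (((i : ℕ) : ZMod (m+1)), 0))

lemma pair_eq {ε ε' : ZMod 2} {a a' : ZMod (m+1)} {t t' : ZMod 2}
    (h : ((ε, .inl (a,t)) : Wty m k) = (ε', .inl (a',t'))) : ε = ε' ∧ a = a' ∧ t = t' := by
  simp [Prod.ext_iff] at h
  exact ⟨h.1, h.2.1, h.2.2⟩

lemma vm_inj : Function.Injective (vm m k) := by
  intro i j h
  obtain ⟨-, h2, -⟩ := pair_eq h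
  have := congrArg ZMod.val h2
  rw [ZMod.val_cast_of_lt i.isLt, ZMod.val_cast_of_lt j.isLt] at this
  exact Fin.ext this

lemma mem_range_vm (x : Wty m k) :
    x ∈ Set.range (vm m k) ↔ ∃ ι : ZMod (m+1), x = (0, .inl (ι, 0)) := by
  constructor
  · rintro ⟨i, rfl⟩; exact ⟨_, rfl⟩
  · rintro ⟨ι, rfl⟩
    refine ⟨⟨ι.val, ZMod.val_lt ι⟩, ?_⟩
    simp [vm, ZMod.natCast_zmod_val]

lemma s1vm (i : Fin (m+1)) :
    (Gr m k).σ 0 (vm m k i) = ((1 : ZMod 2), .inl (((i : ℕ) : ZMod (m+1)), 1)) := s1 _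

lemma mem_range_svm (x : Wty m k) :
    (x ∈ Set.range fun i => (Gr m k).σ 0 (vm m k i)) ↔
      ∃ ι : ZMod (m+1), x = (1, .inl (ι, 1)) := by
  constructor
  · rintro ⟨i, rfl⟩; exact ⟨_, s1vm i⟩
  · rintro ⟨ι, rfl⟩
    refine ⟨⟨ι.val, ZMod.val_lt ι⟩, ?_⟩
    show (Gr m k).σ 0 (vm m k _) = _
    rw [s1vm]
    simp [ZMod.natCast_zmod_val]
    rfl

lemma bdry_main (c : Fin 2) (w x : Wty m k) :
    (((Gr m k).deleteZero (vm m k)).BdryAdj c w x) ↔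
      ∃ i : Fin (m+1), w = vm m k i ∧ x = (Gr m k).σ 0 (vm m k i) := by
  fin_cases c
  · -- c = 0 : boundary color 1, σ = id
    constructor
    · rintro ⟨hw, hx, w', hpath, hend⟩
      have hw1 : w ∈ Set.range (vm m k) := Set.notMem_compl_iff.mp hw
      have hx1 : (x ∈ Set.range fun i => (Gr m k).σ 0 (vm m k i)) :=
        Set.notMem_compl_iff.mp hx
      obtain ⟨i, rfl⟩ := hw1
      obtain ⟨ι', hι'⟩ := (mem_range_svm x).mp hx1
      have hreach : w' = vm m k i ∨ w' = sig0 m k (vm m k i) := by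
        clear hend hι'
        induction hpath with
        | refl => exact Or.inl rfl
        | tail hab hbc ih =>
          obtain ⟨hW', hB', heq⟩ := hbc
          rcases ih with rfl | rfl
          · right
            have h1 : sig0 m k _ = vm m k i := heq
            have h2 : sig0 m k (sig0 m k (vm m k i)) = vm m k i := by
              show sig0 m k (sig0 m k (0, .inl (_, 0))) = _
              rw [s1, s2]
              rfl
            exact (sig0 m k).injective (h1.trans h2.symm)
          · exact absurd (⟨i, rfl⟩ : (_ ∈ Set.range fun j => (Gr m k).σ 0 (vm m k j))) hB'
      rcases hreach with rfl | rfl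
      · exfalso
        have he : vm m k i = x := hend
        rw [← he] at hι'
        exact zne01 (pair_eq hι').1
      · exact ⟨i, rfl, (hend : sig0 m k (vm m k i) = x).symm⟩
    · rintro ⟨i, rfl, rfl⟩
      refine ⟨fun hc => hc ⟨i, rfl⟩, fun hc => hc ⟨i, rfl⟩,
        sig0 m k (vm m k i), Relation.ReflTransGen.single ⟨?_, ?_, ?_⟩, ?_⟩
      · -- sig0 (vm i) ∈ W₀, i.e. ∉ range vm
        intro hc
        obtain ⟨ι, hc⟩ := (mem_range_vm _).mp hc
        exact zne10 (pair_eq ((s1vm i).symm.trans hc)).1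
      · -- σ_c (vm i) = vm i ∈ B₀, i.e. ∉ range
        intro hc
        obtain ⟨ι, hc⟩ := (mem_range_svm _).mp hc
        have hc2 : ((0:ZMod 2), Sum.inl (((i : ℕ) : ZMod (m+1)), (0:ZMod 2))) =
            ((1:ZMod 2), Sum.inl (ι, (1:ZMod 2))) := hc
        exact zne01 (pair_eq hc2).1
      · -- σ₀ (sig0 (vm i)) = σ_c (vm i) = vm i
        show sig0 m k (sig0 m k (vm m k i)) = _
        show sig0 m k (sig0 m k (0, .inl (_, 0))) = _
        rw [s1, s2]
        rfl
      · rfl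
  · -- c = 1 : boundary color 2, σ = flip
    constructor
    · rintro ⟨hw, hx, w', hpath, hend⟩
      have hw1 : w ∈ Set.range (vm m k) := Set.notMem_compl_iff.mp hw
      have hx1 : (x ∈ Set.range fun i => (Gr m k).σ 0 (vm m k i)) :=
        Set.notMem_compl_iff.mp hx
      obtain ⟨i, rfl⟩ := hw1
      obtain ⟨ι', hι'⟩ := (mem_range_svm x).mp hx1
      have hreach : w' = vm m k i ∨ w' = ((0:ZMod 2), .inl (((i : ℕ) : ZMod (m+1)), 1)) := by
        clear hend hι'
        induction hpath with
        | refl => exact Or.inl rfl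
        | tail hab hbc ih =>
          obtain ⟨hW', hB', heq⟩ := hbc
          rcases ih with rfl | rfl
          · right
            have h1 : sig0 m k _ = flipE m k (vm m k i) := heq
            have h2 : sig0 m k ((0:ZMod 2), .inl (((i : ℕ) : ZMod (m+1)), 1)) =
                flipE m k (vm m k i) := by
              rw [s3]; rfl
            exact (sig0 m k).injective (h1.trans h2.symm)
          · exfalso
            apply hB'
            show (flipE m k ((0:ZMod 2), .inl (((i : ℕ) : ZMod (m+1)), 1)) ∈
              Set.range fun j => (Gr m k).σ 0 (vm m k j))
            rw [mem_range_svm]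
            exact ⟨_, rfl⟩
      rcases hreach with rfl | rfl
      · exfalso
        have he : flipE m k (vm m k i) = x := hend
        rw [← he] at hι'
        exact absurd (pair_eq hι').2.2 zne01
      · refine ⟨i, rfl, ?_⟩
        have he : flipE m k ((0:ZMod 2), .inl (((i : ℕ) : ZMod (m+1)), 1)) = x := hend
        rw [← he, s1vm]
        rfl
    · rintro ⟨i, rfl, rfl⟩
      refine ⟨fun hc => hc ⟨i, rfl⟩, fun hc => hc ⟨i, rfl⟩,
        ((0:ZMod 2), .inl (((i : ℕ) : ZMod (m+1)), 1)),
        Relation.ReflTransGen.single ⟨?_, ?_, ?_⟩, ?_⟩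
      · intro hc
        obtain ⟨ι, hc⟩ := (mem_range_vm _).mp hc
        exact absurd (pair_eq hc).2.2 zne10
      · -- flip (vm i) = (1, inl(ι,0)) ∈ B₀
        intro hc
        obtain ⟨ι, hc⟩ := (mem_range_svm _).mp hc
        have hc2 : ((1:ZMod 2), Sum.inl (((i : ℕ) : ZMod (m+1)), (0:ZMod 2))) =
            ((1:ZMod 2), Sum.inl (ι, (1:ZMod 2))) := hc
        exact absurd (pair_eq hc2).2.2 zne01
      · show sig0 m k _ = _
        rw [s3]
        rfl
      · -- σ_c (0, inl(ι,1)) = (1, inl(ι,1)) = σ0 (vm i) = x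
        show flipE m k _ = _
        rw [s1vm]
        rfl

end BordismCon
/-- For all integers `g ≥ 0` and `b ≥ 0` there exist a connected closed
3-colored graph `G` with colors `{0,1,2}` which is a Feynman graph of the quartic
complex matrix model, with Euler characteristic `χ(G) = 2 − 2g`, and `b` pairwise
distinct color-0 edges `e₁, …, e_b` (given by their pairwise distinct white endpoints
`v 1, …, v b`) such that the boundary graph of the open graph obtained from `G` by
deleting `e₁, …, e_b` has exactly `b` connected components, the `i`-th component
consisting of the two endpoints of `e_i` joined by one edge of color 1 and one edge of
color 2: for each nonzero color `c`, boundary adjacency holds precisely between `v i`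
and `σ₀ (v i)`, for some `i`. -/
theorem quartic_matrix_model_generates_all_bordisms (g : ℤ) (hg : 0 ≤ g) (b : ℕ) :
    ∃ (G : CGraph 3) (v : Fin b → G.W),
      G.Connected ∧ G.QuarticFeynman ∧ G.euler = 2 - 2 * g ∧
      Function.Injective v ∧
      (G.deleteZero v).IsProper ∧
      (∀ (c : Fin 2) (w : G.W) (x : G.B),
        (G.deleteZero v).BdryAdj c w x ↔ ∃ i : Fin b, w = v i ∧ x = G.σ 0 (v i)) := by
  obtain ⟨k, hk⟩ : ∃ k : ℕ, g = (k : ℤ) := ⟨g.toNat, (Int.toNat_of_nonneg hg).symm⟩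
  subst hk
  rcases b with _ | m
  · -- no boundary components
    refine ⟨BordismCon.Gr 0 k, fun i => i.elim0, BordismCon.conn, BordismCon.quartic,
      BordismCon.euler_Gr, by intro a; exact a.elim0, deleteZero_isProper _ _, ?_⟩
    intro c w x
    constructor
    · rintro ⟨hw, -, -⟩
      exfalso
      apply hw
      rintro ⟨i, -⟩
      exact i.elim0
    · rintro ⟨i, -⟩
      exact i.elim0
  · -- b = m + 1 boundary components
    exact ⟨BordismCon.Gr m k, BordismCon.vm m k, BordismCon.conn, BordismCon.quartic,
      BordismCon.euler_Gr, BordismCon.vm_inj, deleteZero_isProper _ _,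
      fun c w x => BordismCon.bdry_main c w x⟩
end

section
/- There exists a closed Feynman graph P of the φ₃⁴-theory with two distinct color-0 edges k and l which separates boundary components: for all open Feynman graphs G and H of the φ₃⁴-theory (on vertex sets disjoint from each other and from P) possessing color-0 edges g and h respectively, the graph Y = G #_{g,k} P #_{l,h} H is again a Feynman graph of the φ₃⁴-theory, it is connected whenever G and H are connected, and its boundary graph is the disjoint union ∂Y = ∂G ⊔ ∂H; that is, the external vertices of Y are exactly those of G together with those of H, and for each color a ∈ {1,2,3} two external vertices of Y are joined by a color-a edge in ∂Y if and only if they both belong to G and are joined by a color-a edge in ∂G, or both belong to H and are joined by a color-a edge in ∂H. -/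
namespace Sep
open OGraph
open scoped Classical

noncomputable abbrev P : OGraph 3 where
  W := Fin 4
  B := Fin 4
  finW := inferInstance
  finB := inferInstance
  σ := fun c => if c = 0 then Equiv.swap 0 1 else if c = 1 then Equiv.swap 2 3 else Equiv.refl _
  W₀ := Set.univ
  B₀ := Set.univ
  σ₀ := Equiv.swap 1 3

instance : Fintype P.W := inferInstanceAs (Fintype (Fin 4))
instance : Fintype P.B := inferInstanceAs (Fintype (Fin 4))
instance : DecidableEq P.W := inferInstanceAs (DecidableEq (Fin 4))
instance : DecidableEq P.B := inferInstanceAs (DecidableEq (Fin 4))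

instance : OfNat P.W 0 := ⟨(0 : Fin 4)⟩
instance : OfNat P.W 1 := ⟨(1 : Fin 4)⟩
instance : OfNat P.W 2 := ⟨(2 : Fin 4)⟩
instance : OfNat P.W 3 := ⟨(3 : Fin 4)⟩
instance : OfNat P.B 0 := ⟨(0 : Fin 4)⟩
instance : OfNat P.B 1 := ⟨(1 : Fin 4)⟩
instance : OfNat P.B 2 := ⟨(2 : Fin 4)⟩
instance : OfNat P.B 3 := ⟨(3 : Fin 4)⟩

lemma P_proper : P.IsProper := (Equiv.swap (1:Fin 4) 3).bijective.bijOn_univ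

lemma P_closed : P.IsClosed := ⟨rfl, rfl⟩

lemma P_phi34 : P.Phi34 := by unfold OGraph.Phi34; decide


variable {D : ℕ}

lemma connSum0_σ (G H : OGraph D) (wg : G.W) (wh : H.W) (c : Fin D) :
    ∀ x, (connSum0 G H wg wh).σ c x = Sum.map (G.σ c) (H.σ c) x := by
  rintro (x | x) <;> rfl

lemma connSum0_σ₀_eq (G H : OGraph D) (wg : G.W) (wh : H.W) :
    (connSum0 G H wg wh).σ₀ =
      (Sum.map G.σ₀ H.σ₀) ∘ (Equiv.swap (Sum.inl wg) (Sum.inr wh)) := by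
  funext x
  simp only [connSum0, Function.comp_apply]
  by_cases h1 : @Eq (G.W ⊕ H.W) x (Sum.inl wg)
  · subst h1; rw [if_pos rfl, Function.comp_apply, Equiv.swap_apply_left]; rfl
  · by_cases h2 : @Eq (G.W ⊕ H.W) x (Sum.inr wh)
    · subst h2; rw [if_neg h1, if_pos rfl, Function.comp_apply, Equiv.swap_apply_right]; rfl
    · rw [if_neg h1, if_neg h2]
      exact (congrArg (Sum.map G.σ₀ H.σ₀) (Equiv.swap_apply_of_ne_of_ne h1 h2)).symm

lemma sumMap_bijOn {α β γ δ : Type} {f : α → β} {g : γ → δ} {s : Set α} {t : Set β}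
    {u : Set γ} {v : Set δ} (hf : Set.BijOn f s t) (hg : Set.BijOn g u v) :
    Set.BijOn (Sum.map f g) (Sum.inl '' s ∪ Sum.inr '' u) (Sum.inl '' t ∪ Sum.inr '' v) := by
  refine ⟨?_, ?_, ?_⟩
  · rintro x (⟨w, hw, rfl⟩ | ⟨w, hw, rfl⟩)
    · exact Or.inl ⟨f w, hf.mapsTo hw, rfl⟩
    · exact Or.inr ⟨g w, hg.mapsTo hw, rfl⟩
  · rintro x (⟨w, hw, rfl⟩ | ⟨w, hw, rfl⟩) y (⟨v', hv, rfl⟩ | ⟨v', hv, rfl⟩) h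
    · rw [hf.injOn hw hv (Sum.inl.inj h)]
    · exact absurd h (by simp)
    · exact absurd h (by simp)
    · rw [hg.injOn hw hv (Sum.inr.inj h)]
  · rintro y (⟨b, hb, rfl⟩ | ⟨b, hb, rfl⟩)
    · obtain ⟨w, hw, rfl⟩ := hf.surjOn hb
      exact ⟨Sum.inl w, Or.inl ⟨w, hw, rfl⟩, rfl⟩
    · obtain ⟨w, hw, rfl⟩ := hg.surjOn hb
      exact ⟨Sum.inr w, Or.inr ⟨w, hw, rfl⟩, rfl⟩

lemma connSum0_isProper {G H : OGraph D} (hG : G.IsProper) (hH : H.IsProper)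
    {wg : G.W} {wh : H.W} (hwg : wg ∈ G.W₀) (hwh : wh ∈ H.W₀) :
    (connSum0 G H wg wh).IsProper := by
  have key : ∀ x, x ∈ (Sum.inl '' G.W₀ ∪ Sum.inr '' H.W₀ : Set (G.W ⊕ H.W)) →
      Equiv.swap (Sum.inl wg) (Sum.inr wh) x ∈
        (Sum.inl '' G.W₀ ∪ Sum.inr '' H.W₀ : Set (G.W ⊕ H.W)) := by
    intro x hx
    by_cases h1 : x = Sum.inl wg
    · subst h1; rw [Equiv.swap_apply_left]; exact Or.inr ⟨wh, hwh, rfl⟩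
    · by_cases h2 : x = Sum.inr wh
      · subst h2; rw [Equiv.swap_apply_right]; exact Or.inl ⟨wg, hwg, rfl⟩
      · rwa [Equiv.swap_apply_of_ne_of_ne h1 h2]
  have hswap : Set.BijOn (Equiv.swap (Sum.inl wg) (Sum.inr wh) : _ → _)
      (Sum.inl '' G.W₀ ∪ Sum.inr '' H.W₀) (Sum.inl '' G.W₀ ∪ Sum.inr '' H.W₀) := by
    refine (Equiv.swap (Sum.inl wg) (Sum.inr wh)).bijOn' (fun x hx => key x hx) ?_
    rw [Equiv.symm_swap]
    exact fun x hx => key x hx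
  have h2 := (sumMap_bijOn hG hH).comp hswap
  show Set.BijOn (connSum0 G H wg wh).σ₀ _ _
  rw [connSum0_σ₀_eq]
  exact h2

lemma connSum0_phi34 {G H : OGraph 3} (hG : G.Phi34) (hH : H.Phi34)
    (wg : G.W) (wh : H.W) : (connSum0 G H wg wh).Phi34 := by
  rintro (w | w)
  · obtain ⟨i, w', hne, h1, h2⟩ := hG w
    exact ⟨i, Sum.inl w', fun h => hne (Sum.inl.inj h),
      fun j hj => congrArg Sum.inl (h1 j hj),
      fun j hj => congrArg Sum.inl (h2 j hj)⟩
  · obtain ⟨i, w', hne, h1, h2⟩ := hH w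
    exact ⟨i, Sum.inr w', fun h => hne (Sum.inr.inj h),
      fun j hj => congrArg Sum.inr (h1 j hj),
      fun j hj => congrArg Sum.inr (h2 j hj)⟩


section Main
variable (G H : OGraph 3) (wg : G.W) (wh : H.W)

noncomputable def Y : OGraph 3 :=
  connSum0 (connSum0 G P wg (0 : Fin 4)) H (Sum.inr (2 : Fin 4)) wh

@[simp] lemma Yσ_gl (c : Fin 3) (w : G.W) :
    (Y G H wg wh).σ c (.inl (.inl w)) = .inl (.inl (G.σ c w)) := rfl

@[simp] lemma Yσ_p (c : Fin 3) (p : P.W) :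
    (Y G H wg wh).σ c (.inl (.inr p)) = .inl (.inr (P.σ c p)) := rfl

@[simp] lemma Yσ_h (c : Fin 3) (w : H.W) :
    (Y G H wg wh).σ c (.inr w) = .inr (H.σ c w) := rfl

lemma Yσ₀_gl {w : G.W} (h : w ≠ wg) :
    (Y G H wg wh).σ₀ (.inl (.inl w)) = .inl (.inl (G.σ₀ w)) := by
  simp [Y, connSum0, h]

lemma Yσ₀_wg : (Y G H wg wh).σ₀ (.inl (.inl wg)) = .inl (.inr (0 : Fin 4)) := by
  simp [Y, connSum0]
  decide

lemma Yσ₀_k : (Y G H wg wh).σ₀ (.inl (.inr (0 : Fin 4))) = .inl (.inl (G.σ₀ wg)) := by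
  simp [Y, connSum0, (by decide : ¬ ((0 : Fin 4) = (2 : Fin 4)))]

lemma Yσ₀_l : (Y G H wg wh).σ₀ (.inl (.inr (2 : Fin 4))) = .inr (H.σ₀ wh) := by
  simp [Y, connSum0]

lemma Yσ₀_p1 : (Y G H wg wh).σ₀ (.inl (.inr (1 : Fin 4))) = .inl (.inr (3 : Fin 4)) := by
  simp [Y, connSum0, (by decide : ¬ ((1 : Fin 4) = (2 : Fin 4))),
    (by decide : ¬ ((1 : Fin 4) = (0 : Fin 4)))]

lemma Yσ₀_p3 : (Y G H wg wh).σ₀ (.inl (.inr (3 : Fin 4))) = .inl (.inr (1 : Fin 4)) := by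
  simp [Y, connSum0, (by decide : ¬ ((3 : Fin 4) = (2 : Fin 4))),
    (by decide : ¬ ((3 : Fin 4) = (0 : Fin 4)))]

lemma Yσ₀_h {w : H.W} (h : w ≠ wh) :
    (Y G H wg wh).σ₀ (.inr w) = .inr (H.σ₀ w) := by
  simp [Y, connSum0, h]

lemma Yσ₀_wh : (Y G H wg wh).σ₀ (.inr wh) = .inl (.inr (2 : Fin 4)) := by
  simp [Y, connSum0, (by decide : ¬ ((2 : Fin 4) = (0 : Fin 4)))]
  decide

@[simp] lemma mem_W₀_gl (w : G.W) :
    (Sum.inl (Sum.inl w) ∈ (Y G H wg wh).W₀) ↔ w ∈ G.W₀ := by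
  constructor
  · rintro (⟨_, ⟨u, hu, rfl⟩ | ⟨u, hu, rfl⟩, e⟩ | ⟨_, _, e⟩)
    · cases e; exact hu
    · cases e
    · cases e
  · intro h; exact Or.inl ⟨Sum.inl w, Or.inl ⟨w, h, rfl⟩, rfl⟩

@[simp] lemma mem_W₀_p (p : P.W) : Sum.inl (Sum.inr p) ∈ (Y G H wg wh).W₀ :=
  Or.inl ⟨Sum.inr p, Or.inr ⟨p, trivial, rfl⟩, rfl⟩

@[simp] lemma mem_W₀_h (w : H.W) :
    (Sum.inr w ∈ (Y G H wg wh).W₀) ↔ w ∈ H.W₀ := by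
  constructor
  · rintro (⟨_, _, e⟩ | ⟨u, hu, e⟩)
    · cases e
    · cases e; exact hu
  · intro h; exact Or.inr ⟨w, h, rfl⟩

@[simp] lemma mem_B₀_gl (b : G.B) :
    (Sum.inl (Sum.inl b) ∈ (Y G H wg wh).B₀) ↔ b ∈ G.B₀ := by
  constructor
  · rintro (⟨_, ⟨u, hu, rfl⟩ | ⟨u, hu, rfl⟩, e⟩ | ⟨_, _, e⟩)
    · cases e; exact hu
    · cases e
    · cases e
  · intro h; exact Or.inl ⟨Sum.inl b, Or.inl ⟨b, h, rfl⟩, rfl⟩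

@[simp] lemma mem_B₀_p (q : P.B) : Sum.inl (Sum.inr q) ∈ (Y G H wg wh).B₀ :=
  Or.inl ⟨Sum.inr q, Or.inr ⟨q, trivial, rfl⟩, rfl⟩

@[simp] lemma mem_B₀_h (b : H.B) :
    (Sum.inr b ∈ (Y G H wg wh).B₀) ↔ b ∈ H.B₀ := by
  constructor
  · rintro (⟨_, _, e⟩ | ⟨u, hu, e⟩)
    · cases e
    · cases e; exact hu
  · intro h; exact Or.inr ⟨b, h, rfl⟩

end Main
section Main2
variable (G H : OGraph 3) (wg : G.W) (wh : H.W)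

lemma Pcases (p : P.W) : p = 0 ∨ p = 1 ∨ p = 2 ∨ p = 3 := by revert p; decide

lemma fiber_gl (z : (Y G H wg wh).W) (b : G.B)
    (h : (Y G H wg wh).σ₀ z = .inl (.inl b)) :
    (z = .inl (.inr (0 : Fin 4)) ∧ G.σ₀ wg = b) ∨
      (∃ u, z = .inl (.inl u) ∧ u ≠ wg ∧ G.σ₀ u = b) := by
  rcases z with ((u | p) | u)
  · by_cases hu : u = wg
    · subst hu; rw [Yσ₀_wg] at h; exact nomatch (Sum.inl.inj h)
    · rw [Yσ₀_gl _ _ _ _ hu] at h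
      exact Or.inr ⟨u, rfl, hu, by injection Sum.inl.inj h⟩
  · rcases Pcases p with rfl | rfl | rfl | rfl
    · rw [Yσ₀_k] at h
      exact Or.inl ⟨rfl, by injection Sum.inl.inj h⟩
    · rw [Yσ₀_p1] at h; exact nomatch (Sum.inl.inj h)
    · rw [Yσ₀_l] at h; exact nomatch h
    · rw [Yσ₀_p3] at h; exact nomatch (Sum.inl.inj h)
  · by_cases hu : u = wh
    · subst hu; rw [Yσ₀_wh] at h; exact nomatch (Sum.inl.inj h)
    · rw [Yσ₀_h _ _ _ _ hu] at h; exact nomatch h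

lemma fiber_p (z : (Y G H wg wh).W) (q : P.B)
    (h : (Y G H wg wh).σ₀ z = .inl (.inr q)) :
    (z = .inl (.inl wg) ∧ q = 0) ∨ (z = .inr wh ∧ q = 2) ∨
      (z = .inl (.inr (1 : Fin 4)) ∧ q = 3) ∨ (z = .inl (.inr (3 : Fin 4)) ∧ q = 1) := by
  rcases z with ((u | p) | u)
  · by_cases hu : u = wg
    · subst hu; rw [Yσ₀_wg] at h
      exact Or.inl ⟨rfl, by injection (Sum.inl.inj h).symm⟩
    · rw [Yσ₀_gl _ _ _ _ hu] at h; exact nomatch (Sum.inl.inj h)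
  · rcases Pcases p with rfl | rfl | rfl | rfl
    · rw [Yσ₀_k] at h; exact nomatch (Sum.inl.inj h)
    · rw [Yσ₀_p1] at h
      exact Or.inr (Or.inr (Or.inl ⟨rfl, by injection (Sum.inl.inj h).symm⟩))
    · rw [Yσ₀_l] at h; exact nomatch h
    · rw [Yσ₀_p3] at h
      exact Or.inr (Or.inr (Or.inr ⟨rfl, by injection (Sum.inl.inj h).symm⟩))
  · by_cases hu : u = wh
    · subst hu; rw [Yσ₀_wh] at h
      exact Or.inr (Or.inl ⟨rfl, by injection (Sum.inl.inj h).symm⟩)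
    · rw [Yσ₀_h _ _ _ _ hu] at h; exact nomatch h

lemma fiber_h (z : (Y G H wg wh).W) (b : H.B)
    (h : (Y G H wg wh).σ₀ z = .inr b) :
    (z = .inl (.inr (2 : Fin 4)) ∧ H.σ₀ wh = b) ∨
      (∃ u, z = .inr u ∧ u ≠ wh ∧ H.σ₀ u = b) := by
  rcases z with ((u | p) | u)
  · by_cases hu : u = wg
    · subst hu; rw [Yσ₀_wg] at h; exact nomatch h
    · rw [Yσ₀_gl _ _ _ _ hu] at h; exact nomatch h
  · rcases Pcases p with rfl | rfl | rfl | rfl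
    · rw [Yσ₀_k] at h; exact nomatch h
    · rw [Yσ₀_p1] at h; exact nomatch h
    · rw [Yσ₀_l] at h; exact Or.inl ⟨rfl, Sum.inr.inj h⟩
    · rw [Yσ₀_p3] at h; exact nomatch h
  · by_cases hu : u = wh
    · subst hu; rw [Yσ₀_wh] at h; exact nomatch h
    · rw [Yσ₀_h _ _ _ _ hu] at h; exact Or.inr ⟨u, rfl, hu, Sum.inr.inj h⟩

end Main2
section Main3
variable {G H : OGraph 3} {wg : G.W} {wh : H.W}

lemma acases (a : Fin 3) : a = 0 ∨ a = 1 ∨ a = 2 := by revert a; decide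

lemma reach_G (hpG : G.IsProper) (hwg : wg ∈ G.W₀) (a : Fin 3) (w : G.W)
    {z : (Y G H wg wh).W}
    (h : Relation.ReflTransGen ((Y G H wg wh).Step a) (.inl (.inl w)) z) :
    (∃ u, Relation.ReflTransGen (G.Step a) w u ∧ z = .inl (.inl u)) ∨
      (∃ u, Relation.ReflTransGen (G.Step a) w u ∧ G.σ a u = G.σ₀ wg ∧
        (z = .inl (.inr (0 : Fin 4)) ∨ (a = 0 ∧ z = .inl (.inr (3 : Fin 4))) ∨
          (a = 0 ∧ z = .inl (.inr (1 : Fin 4))))) := by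
  induction h with
  | refl => exact Or.inl ⟨w, Relation.ReflTransGen.refl, rfl⟩
  | @tail z z' hzz hstep ih =>
    obtain ⟨hW₀, hB₀, hσ₀⟩ := hstep
    rcases ih with ⟨u, hu, rfl⟩ | ⟨u, hu, hσ, hz⟩
    · rw [Yσ_gl] at hσ₀ hB₀
      rcases fiber_gl G H wg wh z' (G.σ a u) hσ₀ with ⟨rfl, heq⟩ | ⟨u', rfl, hne, heq⟩
      · exact Or.inr ⟨u, hu, heq.symm, Or.inl rfl⟩
      · exact Or.inl ⟨u', hu.tail ⟨(mem_W₀_gl G H wg wh u').mp hW₀,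
          (mem_B₀_gl G H wg wh _).mp hB₀, heq⟩, rfl⟩
    · have exit : ∀ (hq : (Y G H wg wh).σ₀ z' = .inl (.inr (0 : Fin 4))),
        ∃ u', Relation.ReflTransGen (G.Step a) w u' ∧ z' = Sum.inl (Sum.inl u') := by
        intro hq
        rcases fiber_p G H wg wh z' 0 hq with ⟨rfl, _⟩ | ⟨_, hq2⟩ | ⟨_, hq2⟩ | ⟨_, hq2⟩
        · exact ⟨wg, hu.tail ⟨hwg, hσ ▸ hpG.mapsTo hwg, hσ.symm⟩, rfl⟩
        · exact absurd hq2 (by decide)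
        · exact absurd hq2 (by decide)
        · exact absurd hq2 (by decide)
      rcases hz with rfl | ⟨rfl, rfl⟩ | ⟨rfl, rfl⟩
      · rcases acases a with rfl | rfl | rfl
        · -- σ 0 at white 0 is black 1, go to p3
          rw [Yσ_p, (by decide : P.σ 0 (0:Fin 4) = (1 : Fin 4))] at hσ₀
          rcases fiber_p G H wg wh z' 1 hσ₀ with ⟨_, hq2⟩ | ⟨_, hq2⟩ | ⟨_, hq2⟩ | ⟨rfl, _⟩
          · exact absurd hq2 (by decide)
          · exact absurd hq2 (by decide)
          · exact absurd hq2 (by decide)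
          · exact Or.inr ⟨u, hu, hσ, Or.inr (Or.inl ⟨rfl, rfl⟩)⟩
        · rw [Yσ_p, (by decide : P.σ 1 (0:Fin 4) = (0 : Fin 4))] at hσ₀
          obtain ⟨u', hu', rfl⟩ := exit hσ₀
          exact Or.inl ⟨u', hu', rfl⟩
        · rw [Yσ_p, (by decide : P.σ 2 (0:Fin 4) = (0 : Fin 4))] at hσ₀
          obtain ⟨u', hu', rfl⟩ := exit hσ₀
          exact Or.inl ⟨u', hu', rfl⟩
      · -- z = p3, a = 0 : σ 0 3 = 3, go to p1
        rw [Yσ_p, (by decide : P.σ 0 (3:Fin 4) = (3 : Fin 4))] at hσ₀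
        rcases fiber_p G H wg wh z' 3 hσ₀ with ⟨_, hq2⟩ | ⟨_, hq2⟩ | ⟨rfl, _⟩ | ⟨_, hq2⟩
        · exact absurd hq2 (by decide)
        · exact absurd hq2 (by decide)
        · exact Or.inr ⟨u, hu, hσ, Or.inr (Or.inr ⟨rfl, rfl⟩)⟩
        · exact absurd hq2 (by decide)
      · -- z = p1, a = 0 : σ 0 1 = 0, exit
        rw [Yσ_p, (by decide : P.σ 0 (1:Fin 4) = (0 : Fin 4))] at hσ₀
        obtain ⟨u', hu', rfl⟩ := exit hσ₀
        exact Or.inl ⟨u', hu', rfl⟩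

lemma reach_H (hpH : H.IsProper) (hwh : wh ∈ H.W₀) (a : Fin 3) (w : H.W)
    {z : (Y G H wg wh).W}
    (h : Relation.ReflTransGen ((Y G H wg wh).Step a) (.inr w) z) :
    (∃ u, Relation.ReflTransGen (H.Step a) w u ∧ z = .inr u) ∨
      (∃ u, Relation.ReflTransGen (H.Step a) w u ∧ H.σ a u = H.σ₀ wh ∧
        (z = .inl (.inr (2 : Fin 4)) ∨ (a = 1 ∧ z = .inl (.inr (1 : Fin 4))) ∨
          (a = 1 ∧ z = .inl (.inr (3 : Fin 4))))) := by
  induction h with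
  | refl => exact Or.inl ⟨w, Relation.ReflTransGen.refl, rfl⟩
  | @tail z z' hzz hstep ih =>
    obtain ⟨hW₀, hB₀, hσ₀⟩ := hstep
    rcases ih with ⟨u, hu, rfl⟩ | ⟨u, hu, hσ, hz⟩
    · rw [Yσ_h] at hσ₀ hB₀
      rcases fiber_h G H wg wh z' (H.σ a u) hσ₀ with ⟨rfl, heq⟩ | ⟨u', rfl, hne, heq⟩
      · exact Or.inr ⟨u, hu, heq.symm, Or.inl rfl⟩
      · exact Or.inl ⟨u', hu.tail ⟨(mem_W₀_h G H wg wh u').mp hW₀,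
          (mem_B₀_h G H wg wh _).mp hB₀, heq⟩, rfl⟩
    · have exit : ∀ (hq : (Y G H wg wh).σ₀ z' = .inl (.inr (2 : Fin 4))),
        ∃ u', Relation.ReflTransGen (H.Step a) w u' ∧ z' = Sum.inr u' := by
        intro hq
        rcases fiber_p G H wg wh z' 2 hq with ⟨_, hq2⟩ | ⟨rfl, _⟩ | ⟨_, hq2⟩ | ⟨_, hq2⟩
        · exact absurd hq2 (by decide)
        · exact ⟨wh, hu.tail ⟨hwh, hσ ▸ hpH.mapsTo hwh, hσ.symm⟩, rfl⟩
        · exact absurd hq2 (by decide)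
        · exact absurd hq2 (by decide)
      rcases hz with rfl | ⟨rfl, rfl⟩ | ⟨rfl, rfl⟩
      · rcases acases a with rfl | rfl | rfl
        · rw [Yσ_p, (by decide : P.σ 0 (2:Fin 4) = (2 : Fin 4))] at hσ₀
          obtain ⟨u', hu', rfl⟩ := exit hσ₀
          exact Or.inl ⟨u', hu', rfl⟩
        · -- a = 1 : σ 1 2 = 3, go to p1
          rw [Yσ_p, (by decide : P.σ 1 (2:Fin 4) = (3 : Fin 4))] at hσ₀
          rcases fiber_p G H wg wh z' 3 hσ₀ with ⟨_, hq2⟩ | ⟨_, hq2⟩ | ⟨rfl, _⟩ | ⟨_, hq2⟩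
          · exact absurd hq2 (by decide)
          · exact absurd hq2 (by decide)
          · exact Or.inr ⟨u, hu, hσ, Or.inr (Or.inl ⟨rfl, rfl⟩)⟩
          · exact absurd hq2 (by decide)
        · rw [Yσ_p, (by decide : P.σ 2 (2:Fin 4) = (2 : Fin 4))] at hσ₀
          obtain ⟨u', hu', rfl⟩ := exit hσ₀
          exact Or.inl ⟨u', hu', rfl⟩
      · -- z = p1, a = 1 : σ 1 1 = 1, go to p3
        rw [Yσ_p, (by decide : P.σ 1 (1:Fin 4) = (1 : Fin 4))] at hσ₀
        rcases fiber_p G H wg wh z' 1 hσ₀ with ⟨_, hq2⟩ | ⟨_, hq2⟩ | ⟨_, hq2⟩ | ⟨rfl, _⟩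
        · exact absurd hq2 (by decide)
        · exact absurd hq2 (by decide)
        · exact absurd hq2 (by decide)
        · exact Or.inr ⟨u, hu, hσ, Or.inr (Or.inr ⟨rfl, rfl⟩)⟩
      · -- z = p3, a = 1 : σ 1 3 = 2, exit
        rw [Yσ_p, (by decide : P.σ 1 (3:Fin 4) = (2 : Fin 4))] at hσ₀
        obtain ⟨u', hu', rfl⟩ := exit hσ₀
        exact Or.inl ⟨u', hu', rfl⟩

end Main3
section Main4
variable {G H : OGraph 3} {wg : G.W} {wh : H.W}

lemma lift_G (hpG : G.IsProper) (hwg : wg ∈ G.W₀) (a : Fin 3) {u u' : G.W}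
    (h : Relation.ReflTransGen (G.Step a) u u') :
    Relation.ReflTransGen ((Y G H wg wh).Step a) (.inl (.inl u)) (.inl (.inl u')) := by
  induction h with
  | refl => exact Relation.ReflTransGen.refl
  | @tail v v' hv hstep ih =>
    obtain ⟨hW, hB, hσ⟩ := hstep
    by_cases hv' : v' = wg
    · rw [hv'] at hW hσ ⊢
      -- hσ : G.σ₀ wg = G.σ a v ; enter P at k = 0
      have s1 : (Y G H wg wh).Step a (.inl (.inl v)) (.inl (.inr (0 : Fin 4))) :=
        ⟨mem_W₀_p G H wg wh 0, by rw [Yσ_gl]; exact (mem_B₀_gl G H wg wh _).mpr hB,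
          by rw [Yσ₀_k, Yσ_gl]; exact congrArg _ (congrArg _ hσ)⟩
      have exitstep : ∀ p : Fin 4, P.σ a p = (0 : Fin 4) →
          (Y G H wg wh).Step a (.inl (.inr p)) (.inl (.inl wg)) := by
        intro p hp
        exact ⟨(mem_W₀_gl G H wg wh wg).mpr hW, by rw [Yσ_p]; exact mem_B₀_p G H wg wh _,
          by rw [Yσ₀_wg, Yσ_p, hp]⟩
      rcases acases a with rfl | rfl | rfl
      · have s2 : (Y G H wg wh).Step 0 (.inl (.inr (0 : Fin 4))) (.inl (.inr (3 : Fin 4))) :=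
          ⟨mem_W₀_p G H wg wh 3, by rw [Yσ_p]; exact mem_B₀_p G H wg wh _,
            by rw [Yσ₀_p3, Yσ_p]; exact congrArg _ (congrArg _ (by decide))⟩
        have s3 : (Y G H wg wh).Step 0 (.inl (.inr (3 : Fin 4))) (.inl (.inr (1 : Fin 4))) :=
          ⟨mem_W₀_p G H wg wh 1, by rw [Yσ_p]; exact mem_B₀_p G H wg wh _,
            by rw [Yσ₀_p1, Yσ_p]; exact congrArg _ (congrArg _ (by decide))⟩
        exact (((ih.tail s1).tail s2).tail s3).tail (exitstep 1 (by decide))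
      · exact (ih.tail s1).tail (exitstep 0 (by decide))
      · exact (ih.tail s1).tail (exitstep 0 (by decide))
    · exact ih.tail ⟨(mem_W₀_gl G H wg wh v').mpr hW,
        by rw [Yσ_gl]; exact (mem_B₀_gl G H wg wh _).mpr hB,
        by rw [Yσ_gl, Yσ₀_gl _ _ _ _ hv']; exact congrArg _ (congrArg _ hσ)⟩

lemma lift_H (hpH : H.IsProper) (hwh : wh ∈ H.W₀) (a : Fin 3) {u u' : H.W}
    (h : Relation.ReflTransGen (H.Step a) u u') :
    Relation.ReflTransGen ((Y G H wg wh).Step a) (.inr u) (.inr u') := by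
  induction h with
  | refl => exact Relation.ReflTransGen.refl
  | @tail v v' hv hstep ih =>
    obtain ⟨hW, hB, hσ⟩ := hstep
    by_cases hv' : v' = wh
    · rw [hv'] at hW hσ ⊢
      have s1 : (Y G H wg wh).Step a (.inr v) (.inl (.inr (2 : Fin 4))) :=
        ⟨mem_W₀_p G H wg wh 2, by rw [Yσ_h]; exact (mem_B₀_h G H wg wh _).mpr hB,
          by rw [Yσ₀_l, Yσ_h]; exact congrArg _ hσ⟩
      have exitstep : ∀ p : Fin 4, P.σ a p = (2 : Fin 4) →
          (Y G H wg wh).Step a (.inl (.inr p)) (.inr wh) := by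
        intro p hp
        exact ⟨(mem_W₀_h G H wg wh wh).mpr hW, by rw [Yσ_p]; exact mem_B₀_p G H wg wh _,
          by rw [Yσ₀_wh, Yσ_p, hp]⟩
      rcases acases a with rfl | rfl | rfl
      · exact (ih.tail s1).tail (exitstep 2 (by decide))
      · have s2 : (Y G H wg wh).Step 1 (.inl (.inr (2 : Fin 4))) (.inl (.inr (1 : Fin 4))) :=
          ⟨mem_W₀_p G H wg wh 1, by rw [Yσ_p]; exact mem_B₀_p G H wg wh _,
            by rw [Yσ₀_p1, Yσ_p]; exact congrArg _ (congrArg _ (by decide))⟩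
        have s3 : (Y G H wg wh).Step 1 (.inl (.inr (1 : Fin 4))) (.inl (.inr (3 : Fin 4))) :=
          ⟨mem_W₀_p G H wg wh 3, by rw [Yσ_p]; exact mem_B₀_p G H wg wh _,
            by rw [Yσ₀_p3, Yσ_p]; exact congrArg _ (congrArg _ (by decide))⟩
        exact (((ih.tail s1).tail s2).tail s3).tail (exitstep 3 (by decide))
      · exact (ih.tail s1).tail (exitstep 2 (by decide))
    · exact ih.tail ⟨(mem_W₀_h G H wg wh v').mpr hW,
        by rw [Yσ_h]; exact (mem_B₀_h G H wg wh _).mpr hB,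
        by rw [Yσ_h, Yσ₀_h _ _ _ _ hv']; exact congrArg _ hσ⟩

lemma bdry_iff (hpG : G.IsProper) (hpH : H.IsProper) (hwg : wg ∈ G.W₀) (hwh : wh ∈ H.W₀)
    (a : Fin 3) (x : (Y G H wg wh).W) (y : (Y G H wg wh).B) :
    (Y G H wg wh).BdryAdj a x y ↔
      ((∃ w : G.W, ∃ v : G.B, x = Sum.inl (Sum.inl w) ∧ y = Sum.inl (Sum.inl v) ∧
          G.BdryAdj a w v) ∨
       (∃ w : H.W, ∃ v : H.B, x = Sum.inr w ∧ y = Sum.inr v ∧ H.BdryAdj a w v)) := by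
  constructor
  · rintro ⟨hx, hy, w'', hpath, rfl⟩
    rcases x with ((u | p) | u)
    · rcases reach_G hpG hwg a u hpath with ⟨u2, hu2, rfl⟩ |
        ⟨u2, hu2, hσ, rfl | ⟨_, rfl⟩ | ⟨_, rfl⟩⟩
      · refine Or.inl ⟨u, G.σ a u2, rfl, by rw [Yσ_gl]; rfl, ?_, ?_, u2, hu2, rfl⟩
        · exact fun hc => hx ((mem_W₀_gl G H wg wh u).mpr hc)
        · intro hc
          exact hy (by rw [Yσ_gl]; exact (mem_B₀_gl G H wg wh _).mpr hc)
      · exact absurd (by rw [Yσ_p]; exact mem_B₀_p G H wg wh _) hy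
      · exact absurd (by rw [Yσ_p]; exact mem_B₀_p G H wg wh _) hy
      · exact absurd (by rw [Yσ_p]; exact mem_B₀_p G H wg wh _) hy
    · exact absurd (mem_W₀_p G H wg wh p) hx
    · rcases reach_H hpH hwh a u hpath with ⟨u2, hu2, rfl⟩ |
        ⟨u2, hu2, hσ, rfl | ⟨_, rfl⟩ | ⟨_, rfl⟩⟩
      · refine Or.inr ⟨u, H.σ a u2, rfl, by rw [Yσ_h], ?_, ?_, u2, hu2, rfl⟩
        · exact fun hc => hx ((mem_W₀_h G H wg wh u).mpr hc)
        · intro hc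
          exact hy (by rw [Yσ_h]; exact (mem_B₀_h G H wg wh _).mpr hc)
      · exact absurd (by rw [Yσ_p]; exact mem_B₀_p G H wg wh _) hy
      · exact absurd (by rw [Yσ_p]; exact mem_B₀_p G H wg wh _) hy
      · exact absurd (by rw [Yσ_p]; exact mem_B₀_p G H wg wh _) hy
  · rintro (⟨w, v, rfl, rfl, hw, hv, u, hpath, rfl⟩ | ⟨w, v, rfl, rfl, hw, hv, u, hpath, rfl⟩)
    · refine ⟨fun hc => hw ((mem_W₀_gl G H wg wh w).mp hc),
        fun hc => hv ((mem_B₀_gl G H wg wh _).mp ?_), .inl (.inl u), lift_G hpG hwg a hpath,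
        by rw [Yσ_gl]; rfl⟩
      exact hc
    · refine ⟨fun hc => hw ((mem_W₀_h G H wg wh w).mp hc),
        fun hc => hv ((mem_B₀_h G H wg wh _).mp ?_), .inr u, lift_H hpH hwh a hpath,
        by rw [Yσ_h]⟩
      rwa [← Yσ_h G H wg wh a u]

end Main4
section Main5
variable {G H : OGraph 3} {wg : G.W} {wh : H.W}

lemma adj_symm {D : ℕ} (K : OGraph D) : Symmetric K.Adj := by
  rintro (w | b) (w' | b') h
  · exact h.elim
  · exact h
  · exact h
  · exact h.elim

lemma Y_connected (hwg : wg ∈ G.W₀) (hwh : wh ∈ H.W₀) (hG : G.Connected) (hH : H.Connected) : (Y G H wg wh).Connected := by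
  set K := Y G H wg wh with hK
  have symmR : ∀ {x y : K.W ⊕ K.B}, Relation.ReflTransGen K.Adj x y →
      Relation.ReflTransGen K.Adj y x :=
    fun h => by haveI : Std.Symm K.Adj := ⟨fun _ _ h => adj_symm K h⟩; exact Std.Symm.symm _ _ h
  have adjWB : ∀ (w : K.W) (b : K.B),
      ((∃ c, K.σ c w = b) ∨ (w ∈ K.W₀ ∧ K.σ₀ w = b)) → K.Adj (.inl w) (.inr b) :=
    fun _ _ h => h
  have e1 : K.Adj (.inl (.inl (.inr (0:Fin 4)))) (.inr (.inl (.inr (0:Fin 4)))) :=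
    adjWB _ _ (Or.inl ⟨1, by rw [Yσ_p]; exact congrArg _ (congrArg _ (by decide))⟩)
  have e2 : K.Adj (.inl (.inl (.inr (1:Fin 4)))) (.inr (.inl (.inr (0:Fin 4)))) :=
    adjWB _ _ (Or.inl ⟨0, by rw [Yσ_p]; exact congrArg _ (congrArg _ (by decide))⟩)
  have e4 : K.Adj (.inl (.inl (.inr (1:Fin 4)))) (.inr (.inl (.inr (3:Fin 4)))) :=
    adjWB _ _ (Or.inr ⟨mem_W₀_p G H wg wh _, Yσ₀_p1 G H wg wh⟩)
  have e5 : K.Adj (.inl (.inl (.inr (2:Fin 4)))) (.inr (.inl (.inr (3:Fin 4)))) :=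
    adjWB _ _ (Or.inl ⟨1, by rw [Yσ_p]; exact congrArg _ (congrArg _ (by decide))⟩)
  have e6 : K.Adj (.inl (.inl (.inr (2:Fin 4)))) (.inr (.inl (.inr (2:Fin 4)))) :=
    adjWB _ _ (Or.inl ⟨0, by rw [Yσ_p]; exact congrArg _ (congrArg _ (by decide))⟩)
  have e7 : K.Adj (.inl (.inl (.inr (3:Fin 4)))) (.inr (.inl (.inr (3:Fin 4)))) :=
    adjWB _ _ (Or.inl ⟨0, by rw [Yσ_p]; exact congrArg _ (congrArg _ (by decide))⟩)
  have e8 : K.Adj (.inl (.inl (.inr (0:Fin 4)))) (.inr (.inl (.inr (1:Fin 4)))) :=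
    adjWB _ _ (Or.inl ⟨0, by rw [Yσ_p]; exact congrArg _ (congrArg _ (by decide))⟩)
  have e9 : K.Adj (.inl (.inl (.inr (0:Fin 4)))) (.inr (.inl (.inl (G.σ₀ wg)))) :=
    adjWB _ _ (Or.inr ⟨mem_W₀_p G H wg wh _, Yσ₀_k G H wg wh⟩)
  have e10 : K.Adj (.inl (.inl (.inl wg))) (.inr (.inl (.inr (0:Fin 4)))) :=
    adjWB _ _ (Or.inr ⟨(mem_W₀_gl G H wg wh wg).mpr hwg, Yσ₀_wg G H wg wh⟩)
  have e11 : K.Adj (.inl (.inl (.inr (2:Fin 4)))) (.inr (.inr (H.σ₀ wh))) :=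
    adjWB _ _ (Or.inr ⟨mem_W₀_p G H wg wh _, Yσ₀_l G H wg wh⟩)
  have e12 : K.Adj (.inl (.inr wh)) (.inr (.inl (.inr (2:Fin 4)))) :=
    adjWB _ _ (Or.inr ⟨(mem_W₀_h G H wg wh wh).mpr hwh, Yσ₀_wh G H wg wh⟩)
  have liftG : ∀ {x y : G.W ⊕ G.B}, Relation.ReflTransGen G.Adj x y →
      Relation.ReflTransGen K.Adj
        (Sum.map (fun w => Sum.inl (Sum.inl w)) (fun b => Sum.inl (Sum.inl b)) x)
        (Sum.map (fun w => Sum.inl (Sum.inl w)) (fun b => Sum.inl (Sum.inl b)) y) := by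
    have single : ∀ (w : G.W) (b : G.B), G.Adj (.inl w) (.inr b) →
        Relation.ReflTransGen K.Adj (.inl (.inl (.inl w))) (.inr (.inl (.inl b))) := by
      intro w b hadj
      rcases hadj with ⟨c, hc⟩ | ⟨hw, hb⟩
      · exact Relation.ReflTransGen.single
          (adjWB _ _ (Or.inl ⟨c, by rw [Yσ_gl]; exact congrArg _ (congrArg _ hc)⟩))
      · by_cases hwwg : w = wg
        · rw [hwwg]; rw [hwwg] at hb; rw [← hb]
          exact ((Relation.ReflTransGen.single e10).trans
            (symmR (Relation.ReflTransGen.single e1))).trans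
            (Relation.ReflTransGen.single e9)
        · exact Relation.ReflTransGen.single
            (adjWB _ _ (Or.inr ⟨(mem_W₀_gl G H wg wh w).mpr hw,
              by rw [Yσ₀_gl _ _ _ _ hwwg]; exact congrArg _ (congrArg _ hb)⟩))
    intro x y h
    induction h with
    | refl => exact Relation.ReflTransGen.refl
    | @tail v v' hv hstep ih =>
      rcases v with w | b <;> rcases v' with w' | b'
      · exact hstep.elim
      · exact ih.trans (single w b' hstep)
      · exact ih.trans (symmR (single w' b hstep))
      · exact hstep.elim
  have liftH : ∀ {x y : H.W ⊕ H.B}, Relation.ReflTransGen H.Adj x y →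
      Relation.ReflTransGen K.Adj
        (Sum.map (fun w : H.W => (Sum.inr w : (Y G H wg wh).W)) (fun b : H.B => (Sum.inr b : (Y G H wg wh).B)) x)
        (Sum.map (fun w : H.W => (Sum.inr w : (Y G H wg wh).W)) (fun b : H.B => (Sum.inr b : (Y G H wg wh).B)) y) := by
    have single : ∀ (w : H.W) (b : H.B), H.Adj (.inl w) (.inr b) →
        Relation.ReflTransGen K.Adj (.inl (Sum.inr w)) (.inr (Sum.inr b)) := by
      intro w b hadj
      rcases hadj with ⟨c, hc⟩ | ⟨hw, hb⟩
      · exact Relation.ReflTransGen.single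
          (adjWB _ _ (Or.inl ⟨c, by rw [Yσ_h]; exact congrArg _ hc⟩))
      · by_cases hwwh : w = wh
        · rw [hwwh]; rw [hwwh] at hb; rw [← hb]
          exact ((Relation.ReflTransGen.single e12).trans
            (symmR (Relation.ReflTransGen.single e6))).trans
            (Relation.ReflTransGen.single e11)
        · exact Relation.ReflTransGen.single
            (adjWB _ _ (Or.inr ⟨(mem_W₀_h G H wg wh w).mpr hw,
              by rw [Yσ₀_h _ _ _ _ hwwh]; exact congrArg _ hb⟩))
    intro x y h
    induction h with
    | refl => exact Relation.ReflTransGen.refl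
    | @tail v v' hv hstep ih =>
      rcases v with w | b <;> rcases v' with w' | b'
      · exact hstep.elim
      · exact ih.trans (single w b' hstep)
      · exact ih.trans (symmR (single w' b hstep))
      · exact hstep.elim
  set hub : K.W ⊕ K.B := Sum.inl (Sum.inl (Sum.inr (0:Fin 4))) with hhub
  have rB0 : Relation.ReflTransGen K.Adj hub (.inr (.inl (.inr (0:Fin 4)))) :=
    Relation.ReflTransGen.single e1
  have rW1 : Relation.ReflTransGen K.Adj hub (.inl (.inl (.inr (1:Fin 4)))) :=
    rB0.trans (symmR (Relation.ReflTransGen.single e2))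
  have rB3 : Relation.ReflTransGen K.Adj hub (.inr (.inl (.inr (3:Fin 4)))) :=
    rW1.trans (Relation.ReflTransGen.single e4)
  have rW2 : Relation.ReflTransGen K.Adj hub (.inl (.inl (.inr (2:Fin 4)))) :=
    rB3.trans (symmR (Relation.ReflTransGen.single e5))
  have rB2 : Relation.ReflTransGen K.Adj hub (.inr (.inl (.inr (2:Fin 4)))) :=
    rW2.trans (Relation.ReflTransGen.single e6)
  have rW3 : Relation.ReflTransGen K.Adj hub (.inl (.inl (.inr (3:Fin 4)))) :=
    rB3.trans (symmR (Relation.ReflTransGen.single e7))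
  have rB1 : Relation.ReflTransGen K.Adj hub (.inr (.inl (.inr (1:Fin 4)))) :=
    Relation.ReflTransGen.single e8
  have reachG : ∀ v : G.W ⊕ G.B, Relation.ReflTransGen K.Adj hub
      (Sum.map (fun w => Sum.inl (Sum.inl w)) (fun b => Sum.inl (Sum.inl b)) v) :=
    fun v => (Relation.ReflTransGen.single e9).trans (liftG (hG (Sum.inr (G.σ₀ wg)) v))
  have reachH : ∀ v : H.W ⊕ H.B, Relation.ReflTransGen K.Adj hub
      (Sum.map (fun w : H.W => (Sum.inr w : (Y G H wg wh).W)) (fun b : H.B => (Sum.inr b : (Y G H wg wh).B)) v) :=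
    fun v => (rW2.trans (Relation.ReflTransGen.single e11)).trans
      (liftH (hH (Sum.inr (H.σ₀ wh)) v))
  have reach : ∀ z : K.W ⊕ K.B, Relation.ReflTransGen K.Adj hub z := by
    rintro (((gw | pw) | hw) | ((gb | pb) | hb))
    · exact reachG (Sum.inl gw)
    · rcases Pcases pw with rfl | rfl | rfl | rfl
      · exact Relation.ReflTransGen.refl
      · exact rW1
      · exact rW2
      · exact rW3
    · exact reachH (Sum.inl hw)
    · exact reachG (Sum.inr gb)
    · rcases Pcases pb with rfl | rfl | rfl | rfl
      · exact rB0
      · exact rB1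
      · exact rB2
      · exact rB3
    · exact reachH (Sum.inr hb)
  exact fun x y => (symmR (reach x)).trans (reach y)

end Main5
section Main6
variable (G H : OGraph 3) (wg : G.W) (wh : H.W)

lemma memW_iff (x : (Y G H wg wh).W) :
    x ∉ (Y G H wg wh).W₀ ↔
      ((∃ w : G.W, w ∉ G.W₀ ∧ x = Sum.inl (Sum.inl w)) ∨
       (∃ w : H.W, w ∉ H.W₀ ∧ x = Sum.inr w)) := by
  rcases x with ((u | p) | u)
  · constructor
    · intro h; exact Or.inl ⟨u, fun hc => h ((mem_W₀_gl G H wg wh u).mpr hc), rfl⟩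
    · rintro (⟨w, hw, heq⟩ | ⟨w, hw, heq⟩)
      · obtain rfl := Sum.inl.inj (Sum.inl.inj heq)
        exact fun hc => hw ((mem_W₀_gl G H wg wh u).mp hc)
      · exact nomatch heq
  · constructor
    · intro h; exact absurd (mem_W₀_p G H wg wh p) h
    · rintro (⟨w, hw, heq⟩ | ⟨w, hw, heq⟩)
      · exact nomatch (Sum.inl.inj heq)
      · exact nomatch heq
  · constructor
    · intro h; exact Or.inr ⟨u, fun hc => h ((mem_W₀_h G H wg wh u).mpr hc), rfl⟩
    · rintro (⟨w, hw, heq⟩ | ⟨w, hw, heq⟩)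
      · exact nomatch heq
      · obtain rfl := Sum.inr.inj heq
        exact fun hc => hw ((mem_W₀_h G H wg wh u).mp hc)

lemma memB_iff (y : (Y G H wg wh).B) :
    y ∉ (Y G H wg wh).B₀ ↔
      ((∃ v : G.B, v ∉ G.B₀ ∧ y = Sum.inl (Sum.inl v)) ∨
       (∃ v : H.B, v ∉ H.B₀ ∧ y = Sum.inr v)) := by
  rcases y with ((u | p) | u)
  · constructor
    · intro h; exact Or.inl ⟨u, fun hc => h ((mem_B₀_gl G H wg wh u).mpr hc), rfl⟩
    · rintro (⟨w, hw, heq⟩ | ⟨w, hw, heq⟩)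
      · obtain rfl := Sum.inl.inj (Sum.inl.inj heq)
        exact fun hc => hw ((mem_B₀_gl G H wg wh u).mp hc)
      · exact nomatch heq
  · constructor
    · intro h; exact absurd (mem_B₀_p G H wg wh p) h
    · rintro (⟨w, hw, heq⟩ | ⟨w, hw, heq⟩)
      · exact nomatch (Sum.inl.inj heq)
      · exact nomatch heq
  · constructor
    · intro h; exact Or.inr ⟨u, fun hc => h ((mem_B₀_h G H wg wh u).mpr hc), rfl⟩
    · rintro (⟨w, hw, heq⟩ | ⟨w, hw, heq⟩)
      · exact nomatch heq
      · obtain rfl := Sum.inr.inj heq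
        exact fun hc => hw ((mem_B₀_h G H wg wh u).mp hc)

end Main6
end Sep


/-- There exists a closed Feynman graph `P` of the φ₃⁴-theory with two
distinct color-0 edges `k` and `l` (determined by their white endpoints) which separates
boundary components: for all open Feynman graphs `G` and `H` of the φ₃⁴-theory with
color-0 edges `g` (white endpoint `wg ∈ W₀(G)`) and `h` (white endpoint `wh ∈ W₀(H)`),
the graph `Y = G #_{g,k} P #_{l,h} H` is again a Feynman graph of the φ₃⁴-theory, it is
connected whenever `G` and `H` are, its external vertices are exactly those of `G`
together with those of `H`, and for each color `a ∈ {1,2,3}` two external vertices of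
`Y` are joined by a color-`a` boundary edge iff they both come from `G` and are joined
by a color-`a` edge in `∂G`, or both come from `H` and are joined by a color-`a` edge
in `∂H`; that is, `∂Y = ∂G ⊔ ∂H`. -/
theorem separating_graph_exists :
    ∃ (P : OGraph 3) (k l : P.W), P.IsProper ∧ P.IsClosed ∧ P.Phi34 ∧ k ≠ l ∧
      ∀ (G H : OGraph 3), G.IsProper → H.IsProper → G.Phi34 → H.Phi34 →
        ∀ (wg : G.W), wg ∈ G.W₀ → ∀ (wh : H.W), wh ∈ H.W₀ →
          let Y : OGraph 3 := OGraph.connSum0 (OGraph.connSum0 G P wg k) H (Sum.inr l) wh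
          Y.IsProper ∧ Y.Phi34 ∧
          (G.Connected → H.Connected → Y.Connected) ∧
          (∀ x : Y.W, x ∉ Y.W₀ ↔
            ((∃ w : G.W, w ∉ G.W₀ ∧ x = Sum.inl (Sum.inl w)) ∨
             (∃ w : H.W, w ∉ H.W₀ ∧ x = Sum.inr w))) ∧
          (∀ y : Y.B, y ∉ Y.B₀ ↔
            ((∃ v : G.B, v ∉ G.B₀ ∧ y = Sum.inl (Sum.inl v)) ∨
             (∃ v : H.B, v ∉ H.B₀ ∧ y = Sum.inr v))) ∧
          (∀ (a : Fin 3) (x : Y.W) (y : Y.B),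
            Y.BdryAdj a x y ↔
              ((∃ w : G.W, ∃ v : G.B, x = Sum.inl (Sum.inl w) ∧ y = Sum.inl (Sum.inl v) ∧
                  G.BdryAdj a w v) ∨
               (∃ w : H.W, ∃ v : H.B, x = Sum.inr w ∧ y = Sum.inr v ∧
                  H.BdryAdj a w v))) := by
  refine ⟨Sep.P, (0 : Fin 4), (2 : Fin 4), Sep.P_proper, Sep.P_closed, Sep.P_phi34,
    by decide, ?_⟩
  intro G H hpG hpH hfG hfH wg hwg wh hwh
  have hMproper : (OGraph.connSum0 G Sep.P wg (0 : Fin 4)).IsProper :=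
    Sep.connSum0_isProper hpG Sep.P_proper hwg trivial
  have hmem : (Sum.inr (2 : Fin 4) : G.W ⊕ Sep.P.W) ∈
      (OGraph.connSum0 G Sep.P wg (0 : Fin 4)).W₀ :=
    Or.inr ⟨(2 : Fin 4), trivial, rfl⟩
  exact ⟨Sep.connSum0_isProper hMproper hpH hmem hwh,
    Sep.connSum0_phi34 (Sep.connSum0_phi34 hfG Sep.P_phi34 wg (0 : Fin 4)) hfH
      (Sum.inr (2 : Fin 4)) wh,
    fun hGc hHc => Sep.Y_connected hwg hwh hGc hHc,
    Sep.memW_iff G H wg wh,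
    Sep.memB_iff G H wg wh,
    Sep.bdry_iff hpG hpH hwg hwh⟩
end

section
/- Let R and Q be connected closed 3-colored graphs on disjoint vertex sets, let c be any of the three colors, and let e be a color-c edge of R and f a color-c edge of Q. Then the Euler characteristic of the connected sum satisfies χ(R #_{e,f} Q) = χ(R) + χ(Q) − 2. -/
namespace CGraph

/-- Connected sum of two closed `D`-colored graphs along the color-`c` edges
`e = (v, σ_c v)` of `R` and `f = (v', τ_c v')` of `Q`: delete the two edges and add the
color-`c` edges `(v, τ_c v')` and `(v', σ_c v)`; all other edges are kept. -/
noncomputable def connSum {D : ℕ} (R Q : CGraph D) (c : Fin D) (v : R.W) (v' : Q.W) : CGraph D where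
  W := R.W ⊕ Q.W
  B := R.B ⊕ Q.B
  finW := by haveI := R.finW; haveI := Q.finW; exact inferInstance
  finB := by haveI := R.finB; haveI := Q.finB; exact inferInstance
  σ := fun d =>
    letI : DecidableEq (R.B ⊕ Q.B) := Classical.decEq _
    if d = c then
      ((R.σ d).sumCongr (Q.σ d)).trans
        (Equiv.swap (Sum.inl (R.σ c v)) (Sum.inr (Q.σ c v')))
    else (R.σ d).sumCongr (Q.σ d)

end CGraph


/-! Auxiliary infrastructure for counting cycles via one-step quotients. -/

namespace EulerAux

open Equiv Sum

variable {α β : Type*}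

/-- The one-step relation of a permutation. -/
def pstep (π : Equiv.Perm α) : α → α → Prop := fun x y => π x = y

theorem sameCycle_iff_eqvGen (π : Equiv.Perm α) (x y : α) :
    π.SameCycle x y ↔ Relation.EqvGen (pstep π) x y := by
  constructor
  · rintro ⟨n, rfl⟩
    induction n using Int.induction_on with
    | zero => simpa using Relation.EqvGen.refl x
    | succ n ih =>
        refine Relation.EqvGen.trans _ _ _ ih (Relation.EqvGen.rel _ _ ?_)
        show π ((π ^ (n : ℤ)) x) = (π ^ ((n : ℤ) + 1)) x
        rw [add_comm, zpow_one_add]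
        simp [Equiv.Perm.mul_apply]
    | pred n ih =>
        refine Relation.EqvGen.trans _ _ _ ih (Relation.EqvGen.symm _ _
          (Relation.EqvGen.rel _ _ ?_))
        show π ((π ^ (-(n : ℤ) - 1)) x) = (π ^ (-(n : ℤ))) x
        have : (-(n : ℤ)) = 1 + (-(n : ℤ) - 1) := by ring
        rw [this, zpow_add, zpow_one]
        simp [Equiv.Perm.mul_apply]
  · intro h
    induction h with
    | rel x y h => exact ⟨1, by simpa [pstep] using h⟩
    | refl x => exact ⟨0, by simp⟩
    | symm x y _ ih => exact ih.symm
    | trans x y z _ _ ih ih' => exact ih.trans ih'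

theorem numCycles_eq_card_quot (π : Equiv.Perm α) :
    CGraph.numCycles π = Nat.card (Quot (pstep π)) := by
  apply Nat.card_congr
  exact
    { toFun := Quotient.lift (Quot.mk (pstep π))
        (fun a b h => Quot.eqvGen_sound ((sameCycle_iff_eqvGen π a b).1 h))
      invFun := Quot.lift (fun a => Quotient.mk (CGraph.cycleSetoid π) a)
        (fun a b h => Quotient.sound ((sameCycle_iff_eqvGen π a b).2
          (Relation.EqvGen.rel _ _ h)))
      left_inv := by intro q; induction q using Quotient.ind; rfl
      right_inv := by intro q; induction q using Quot.ind; rfl }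

/-- Cycle count of a "disjoint-union" permutation. -/
theorem card_quot_sum [Finite α] [Finite β] (P : Equiv.Perm (α ⊕ β))
    (π : Equiv.Perm α) (ρ : Equiv.Perm β)
    (h3 : ∀ x, P (.inl x) = .inl (π x)) (h4 : ∀ y, P (.inr y) = .inr (ρ y)) :
    Nat.card (Quot (pstep P)) = Nat.card (Quot (pstep π)) + Nat.card (Quot (pstep ρ)) := by
  rw [← Nat.card_sum]
  apply Nat.card_congr
  refine
    { toFun := Quot.lift (Sum.elim (fun x => .inl (Quot.mk (pstep π) x))
        (fun y => .inr (Quot.mk (pstep ρ) y))) ?_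
      invFun := Sum.elim
        (Quot.lift (fun x => Quot.mk (pstep P) (.inl x)) ?_)
        (Quot.lift (fun y => Quot.mk (pstep P) (.inr y)) ?_)
      left_inv := ?_
      right_inv := ?_ }
  · rintro (x | y) z h
    · rw [show z = Sum.inl (π x) from h.symm.trans (h3 x)]
      exact congrArg Sum.inl (Quot.sound rfl)
    · rw [show z = Sum.inr (ρ y) from h.symm.trans (h4 y)]
      exact congrArg Sum.inr (Quot.sound rfl)
  · intro x y h
    exact Quot.sound (show P (Sum.inl x) = Sum.inl y by rw [h3, h])
  · intro x y h
    exact Quot.sound (show P (Sum.inr x) = Sum.inr y by rw [h4, h])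
  · intro q
    induction q using Quot.ind with
    | _ z => rcases z with x | y <;> rfl
  · rintro (q | q) <;> (induction q using Quot.ind with | _ z => rfl)

/-- Identifying two distinct points of a finite type drops the cardinality by 1. -/
theorem card_quot_pair {γ : Type*} [Finite γ] (u w : γ) (h : u ≠ w) :
    Nat.card (Quot (fun x y => x = u ∧ y = w)) + 1 = Nat.card γ := by
  classical
  haveI := Fintype.ofFinite γ
  have e : Quot (fun x y => x = u ∧ y = w) ≃ {x : γ // x ≠ w} :=
    { toFun := Quot.lift (fun x => if hx : x = w then ⟨u, h⟩ else ⟨x, hx⟩)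
        (by rintro x y ⟨rfl, rfl⟩; simp [h])
      invFun := fun x => Quot.mk _ x.1
      left_inv := by
        refine Quot.ind ?_
        intro x
        by_cases hx : x = w
        · subst hx
          simp only [dif_pos]
          exact Quot.sound ⟨rfl, rfl⟩
        · simp [hx]
      right_inv := by rintro ⟨x, hx⟩; simp [hx] }
  rw [Nat.card_congr e, Nat.card_eq_fintype_card, Nat.card_eq_fintype_card]
  have h1 : Fintype.card {x : γ // x ≠ w} = Fintype.card γ - 1 := by
    have := Fintype.card_subtype_compl (fun x : γ => x = w)
    simpa [Fintype.card_subtype_eq] using this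
  have h2 : 0 < Fintype.card γ := Fintype.card_pos_iff.mpr ⟨u⟩
  omega

/-- Cycle count of a permutation of a sum which is component-wise except that it
merges the cycle of `a` (in `π`) with the cycle of `b` (in `ρ`). -/
theorem card_quot_merge [Finite α] [Finite β] (P : Equiv.Perm (α ⊕ β))
    (π : Equiv.Perm α) (ρ : Equiv.Perm β) (a : α) (b : β)
    (h1 : P (.inl a) = .inr (ρ b)) (h2 : P (.inr b) = .inl (π a))
    (h3 : ∀ x, x ≠ a → P (.inl x) = .inl (π x))
    (h4 : ∀ y, y ≠ b → P (.inr y) = .inr (ρ y)) :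
    Nat.card (Quot (pstep P)) + 1
      = Nat.card (Quot (pstep π)) + Nat.card (Quot (pstep ρ)) := by
  classical
  -- `ρ` and `π` have finite order
  have hρn : ∃ n : ℕ, (ρ ^ (n + 1)) b = b := by
    refine ⟨orderOf ρ - 1, ?_⟩
    have hpos : 0 < orderOf ρ := orderOf_pos ρ
    rw [Nat.sub_add_cancel hpos, pow_orderOf_eq_one]; rfl
  have hπn : ∃ n : ℕ, (π ^ (n + 1)) a = a := by
    refine ⟨orderOf π - 1, ?_⟩
    have hpos : 0 < orderOf π := orderOf_pos π
    rw [Nat.sub_add_cancel hpos, pow_orderOf_eq_one]; rfl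
  -- walking around the ρ-cycle of b inside P
  have C2 : Quot.mk (pstep P) (Sum.inr (ρ b)) = Quot.mk (pstep P) (Sum.inr b) := by
    obtain ⟨n, hn⟩ := hρn
    have L : ∀ j : ℕ,
        Quot.mk (pstep P) (Sum.inr (ρ b)) = Quot.mk (pstep P) (Sum.inr ((ρ ^ (j + 1)) b)) ∨
        Quot.mk (pstep P) (Sum.inr (ρ b)) = Quot.mk (pstep P) (Sum.inr b) := by
      intro j
      induction j with
      | zero => left; rw [pow_one]
      | succ j ih =>
          rcases ih with hL | hR
          · by_cases hb : (ρ ^ (j + 1)) b = b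
            · right; rw [hL, hb]
            · left
              rw [hL]
              refine Quot.sound ?_
              show P (Sum.inr ((ρ ^ (j + 1)) b)) = Sum.inr ((ρ ^ (j + 1 + 1)) b)
              rw [h4 _ hb]
              conv_rhs => rw [pow_succ', Equiv.Perm.mul_apply]
          · right; exact hR
    rcases L n with hL | hR
    · rw [hL, hn]
    · exact hR
  have C1 : Quot.mk (pstep P) (Sum.inl (π a)) = Quot.mk (pstep P) (Sum.inl a) := by
    obtain ⟨n, hn⟩ := hπn
    have L : ∀ j : ℕ,
        Quot.mk (pstep P) (Sum.inl (π a)) = Quot.mk (pstep P) (Sum.inl ((π ^ (j + 1)) a)) ∨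
        Quot.mk (pstep P) (Sum.inl (π a)) = Quot.mk (pstep P) (Sum.inl a) := by
      intro j
      induction j with
      | zero => left; rw [pow_one]
      | succ j ih =>
          rcases ih with hL | hR
          · by_cases hb : (π ^ (j + 1)) a = a
            · right; rw [hL, hb]
            · left
              rw [hL]
              refine Quot.sound ?_
              show P (Sum.inl ((π ^ (j + 1)) a)) = Sum.inl ((π ^ (j + 1 + 1)) a)
              rw [h3 _ hb]
              conv_rhs => rw [pow_succ', Equiv.Perm.mul_apply]
          · right; exact hR
    rcases L n with hL | hR
    · rw [hL, hn]
    · exact hR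
  have K1 : ∀ x, Quot.mk (pstep P) (Sum.inl x) = Quot.mk (pstep P) (Sum.inl (π x)) := by
    intro x
    by_cases hx : x = a
    · rw [hx]
      calc Quot.mk (pstep P) (Sum.inl a) = Quot.mk (pstep P) (Sum.inr (ρ b)) := Quot.sound h1
        _ = Quot.mk (pstep P) (Sum.inr b) := C2
        _ = Quot.mk (pstep P) (Sum.inl (π a)) := Quot.sound h2
    · exact Quot.sound (h3 x hx)
  have K2 : ∀ y, Quot.mk (pstep P) (Sum.inr y) = Quot.mk (pstep P) (Sum.inr (ρ y)) := by
    intro y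
    by_cases hy : y = b
    · rw [hy]
      calc Quot.mk (pstep P) (Sum.inr b) = Quot.mk (pstep P) (Sum.inl (π a)) := Quot.sound h2
        _ = Quot.mk (pstep P) (Sum.inl a) := C1
        _ = Quot.mk (pstep P) (Sum.inr (ρ b)) := Quot.sound h1
    · exact Quot.sound (h4 y hy)
  have Kab : Quot.mk (pstep P) (Sum.inl a) = Quot.mk (pstep P) (Sum.inr b) := by
    refine Eq.trans ?_ C2
    exact Quot.sound h1
  -- the merged-pair relation on the disjoint union of the quotients
  set s : (Quot (pstep π) ⊕ Quot (pstep ρ)) → (Quot (pstep π) ⊕ Quot (pstep ρ)) → Prop :=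
    fun x y => x = Sum.inl (Quot.mk (pstep π) a) ∧ y = Sum.inr (Quot.mk (pstep ρ) b) with hs
  have E1 : Quot (pstep P) ≃ Quot s := by
    refine
      { toFun := Quot.lift (Sum.elim
          (fun x => Quot.mk s (.inl (Quot.mk (pstep π) x)))
          (fun y => Quot.mk s (.inr (Quot.mk (pstep ρ) y)))) ?_
        invFun := Quot.lift (Sum.elim
          (Quot.lift (fun x => Quot.mk (pstep P) (.inl x))
            (fun x y (h : π x = y) => h ▸ K1 x))
          (Quot.lift (fun y => Quot.mk (pstep P) (.inr y))
            (fun y z (h : ρ y = z) => h ▸ K2 y))) ?_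
        left_inv := ?_
        right_inv := ?_ }
    rotate_left 2
    · intro q
      induction q using Quot.ind with
      | _ z => rcases z with x | y <;> rfl
    · intro q
      induction q using Quot.ind with
      | _ p =>
        rcases p with q | q <;> (induction q using Quot.ind with | _ z => rfl)
    · rintro (x | y) z h
      · by_cases hx : x = a
        · subst hx
          rw [show z = Sum.inr (ρ b) from h.symm.trans h1]
          simp only [Sum.elim_inl, Sum.elim_inr]
          have hb : Quot.mk (pstep ρ) b = Quot.mk (pstep ρ) (ρ b) := Quot.sound rfl
          rw [← hb]
          exact Quot.sound ⟨rfl, rfl⟩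
        · rw [show z = Sum.inl (π x) from h.symm.trans (h3 x hx)]
          simp only [Sum.elim_inl]
          exact congrArg (fun q => Quot.mk s (Sum.inl q)) (Quot.sound rfl)
      · by_cases hy : y = b
        · subst hy
          rw [show z = Sum.inl (π a) from h.symm.trans h2]
          simp only [Sum.elim_inl, Sum.elim_inr]
          have ha : Quot.mk (pstep π) a = Quot.mk (pstep π) (π a) := Quot.sound rfl
          rw [← ha]
          exact (Quot.sound ⟨rfl, rfl⟩).symm
        · rw [show z = Sum.inr (ρ y) from h.symm.trans (h4 y hy)]
          simp only [Sum.elim_inr]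
          exact congrArg (fun q => Quot.mk s (Sum.inr q)) (Quot.sound rfl)
    · rintro p q ⟨rfl, rfl⟩
      exact Kab
  have E2 : Nat.card (Quot s) + 1
      = Nat.card (Quot (pstep π) ⊕ Quot (pstep ρ)) := by
    exact card_quot_pair _ _ (by simp)
  rw [Nat.card_congr E1, E2, Nat.card_sum]

end EulerAux

namespace EulerAux

open CGraph

theorem untouched (R Q : CGraph 3) (c : Fin 3) (v : R.W) (v' : Q.W)
    {a b : Fin 3} (ha : a ≠ c) (hb : b ≠ c) :
    CGraph.numCycles ((CGraph.connSum R Q c v v').biperm a b)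
      = CGraph.numCycles (R.biperm a b) + CGraph.numCycles (Q.biperm a b) := by
  haveI := R.finW; haveI := Q.finW
  rw [numCycles_eq_card_quot, numCycles_eq_card_quot, numCycles_eq_card_quot]
  refine card_quot_sum _ (R.biperm a b) (Q.biperm a b) ?_ ?_
  · intro x
    simp [CGraph.connSum, CGraph.biperm, ha, hb]
  · intro y
    simp [CGraph.connSum, CGraph.biperm, ha, hb]

theorem touched_first (R Q : CGraph 3) (c : Fin 3) (v : R.W) (v' : Q.W)
    {b : Fin 3} (hb : b ≠ c) :
    CGraph.numCycles ((CGraph.connSum R Q c v v').biperm c b) + 1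
      = CGraph.numCycles (R.biperm c b) + CGraph.numCycles (Q.biperm c b) := by
  haveI := R.finW; haveI := Q.finW
  rw [numCycles_eq_card_quot, numCycles_eq_card_quot, numCycles_eq_card_quot]
  refine card_quot_merge _ (R.biperm c b) (Q.biperm c b) v v' ?_ ?_ ?_ ?_
  · simp [CGraph.connSum, CGraph.biperm, hb, Equiv.swap_apply_left]
  · simp [CGraph.connSum, CGraph.biperm, hb, Equiv.swap_apply_right]
  · intro x hx
    have h₁ : (Sum.inl ((R.σ c) x) : R.B ⊕ Q.B) ≠ Sum.inl ((R.σ c) v) := by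
      simp only [ne_eq, Sum.inl.injEq, EmbeddingLike.apply_eq_iff_eq]
      exact hx
    have h₂ : (Sum.inl ((R.σ c) x) : R.B ⊕ Q.B) ≠ Sum.inr ((Q.σ c) v') := by simp
    simp [CGraph.connSum, CGraph.biperm, hb, Equiv.swap_apply_def, h₁, h₂]
  · intro y hy
    have h₁ : (Sum.inr ((Q.σ c) y) : R.B ⊕ Q.B) ≠ Sum.inl ((R.σ c) v) := by simp
    have h₂ : (Sum.inr ((Q.σ c) y) : R.B ⊕ Q.B) ≠ Sum.inr ((Q.σ c) v') := by
      simp only [ne_eq, Sum.inr.injEq, EmbeddingLike.apply_eq_iff_eq]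
      exact hy
    simp [CGraph.connSum, CGraph.biperm, hb, Equiv.swap_apply_def, h₁, h₂]

theorem touched_second (R Q : CGraph 3) (c : Fin 3) (v : R.W) (v' : Q.W)
    {a : Fin 3} (ha : a ≠ c) :
    CGraph.numCycles ((CGraph.connSum R Q c v v').biperm a c) + 1
      = CGraph.numCycles (R.biperm a c) + CGraph.numCycles (Q.biperm a c) := by
  haveI := R.finW; haveI := Q.finW
  rw [numCycles_eq_card_quot, numCycles_eq_card_quot, numCycles_eq_card_quot]
  refine card_quot_merge _ (R.biperm a c) (Q.biperm a c)
    ((R.biperm a c).symm v) ((Q.biperm a c).symm v') ?_ ?_ ?_ ?_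
  · simp [CGraph.connSum, CGraph.biperm, ha, Equiv.swap_apply_left]
  · simp [CGraph.connSum, CGraph.biperm, ha, Equiv.swap_apply_right]
  · intro x hx
    have hx' : (R.σ a) x ≠ (R.σ c) v := by
      intro h
      apply hx
      simp [CGraph.biperm, ← h]
    have h₁ : (Sum.inl ((R.σ a) x) : R.B ⊕ Q.B) ≠ Sum.inl ((R.σ c) v) := by
      simpa using hx'
    have h₂ : (Sum.inl ((R.σ a) x) : R.B ⊕ Q.B) ≠ Sum.inr ((Q.σ c) v') := by simp
    simp [CGraph.connSum, CGraph.biperm, ha, Equiv.swap_apply_def, h₁, h₂]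
  · intro y hy
    have hy' : (Q.σ a) y ≠ (Q.σ c) v' := by
      intro h
      apply hy
      simp [CGraph.biperm, ← h]
    have h₁ : (Sum.inr ((Q.σ a) y) : R.B ⊕ Q.B) ≠ Sum.inl ((R.σ c) v) := by simp
    have h₂ : (Sum.inr ((Q.σ a) y) : R.B ⊕ Q.B) ≠ Sum.inr ((Q.σ c) v') := by
      simpa using hy'
    simp [CGraph.connSum, CGraph.biperm, ha, Equiv.swap_apply_def, h₁, h₂]

theorem faces_connSum (R Q : CGraph 3) (c : Fin 3) (v : R.W) (v' : Q.W) :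
    (CGraph.connSum R Q c v v').faces + 2 = R.faces + Q.faces := by
  have hc : c = 0 ∨ c = 1 ∨ c = 2 := by
    revert c; decide
  rcases hc with rfl | rfl | rfl
  · have h1 := touched_first R Q 0 v v' (b := 1) (by decide)
    have h2 := touched_first R Q 0 v v' (b := 2) (by decide)
    have h3 := untouched R Q 0 v v' (a := 1) (b := 2) (by decide) (by decide)
    simp only [CGraph.faces] at *
    omega
  · have h1 := touched_second R Q 1 v v' (a := 0) (by decide)
    have h2 := untouched R Q 1 v v' (a := 0) (b := 2) (by decide) (by decide)
    have h3 := touched_first R Q 1 v v' (b := 2) (by decide)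
    simp only [CGraph.faces] at *
    omega
  · have h1 := untouched R Q 2 v v' (a := 0) (b := 1) (by decide) (by decide)
    have h2 := touched_second R Q 2 v v' (a := 0) (by decide)
    have h3 := touched_second R Q 2 v v' (a := 1) (by decide)
    simp only [CGraph.faces] at *
    omega

end EulerAux

/-- For connected closed 3-colored graphs `R` and `Q`, any color `c`,
a color-`c` edge `e = (v, σ_c v)` of `R` and a color-`c` edge `f = (v', τ_c v')` of `Q`,
the Euler characteristic of the connected sum satisfies
`χ(R #_{e,f} Q) = χ(R) + χ(Q) − 2`. -/
theorem euler_connSum (R Q : CGraph 3) (hR : R.Connected) (hQ : Q.Connected)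
    (c : Fin 3) (v : R.W) (v' : Q.W) :
    (CGraph.connSum R Q c v v').euler = R.euler + Q.euler - 2 := by
  haveI := R.finW; haveI := Q.finW
  have hF := EulerAux.faces_connSum R Q c v v'
  have hW : Nat.card (CGraph.connSum R Q c v v').W = Nat.card R.W + Nat.card Q.W := by
    rw [show (CGraph.connSum R Q c v v').W = (R.W ⊕ Q.W) from rfl]
    exact Nat.card_sum
  have hF' : ((CGraph.connSum R Q c v v').faces : ℤ) + 2
      = (R.faces : ℤ) + (Q.faces : ℤ) := by exact_mod_cast hF
  simp only [CGraph.euler, hW]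
  push_cast
  linarith
end

section
/- Fix a complex matrix model with finite exponent set I (potential Σ_{p∈I} λ_p Tr((φφ̄)^p)). If R and Q are connected Feynman graphs of this model (closed 3-colored graphs with colors {0,1,2}, on disjoint vertex sets), e is a color-0 edge of R and f is a color-0 edge of Q, then the connected sum R #_{e,f} Q is again a connected Feynman graph of the same model. -/
/-- A closed 3-colored graph with colors `{0,1,2}` is a Feynman graph of the complex
matrix model with potential `Σ_{p ∈ I} λ_p Tr((φφ̄)^p)` iff every (12)-bicolored face has
exactly `2p` vertices for some `p ∈ I`, i.e. every orbit of `σ₂⁻¹ ∘ σ₁` has exactly `p`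
elements for some `p ∈ I`. -/
def CGraph.IsModelFeynman (I : Finset ℕ) (G : CGraph 3) : Prop :=
  ∀ v : G.W, G.faceSize 1 2 v ∈ I

namespace CGraph

lemma biperm_symm (G : CGraph D) (c d : Fin D) : (G.biperm c d)⁻¹ = G.biperm d c := by
  ext x; simp [biperm, Equiv.Perm.inv_def]

lemma biperm_self (G : CGraph D) (c : Fin D) : G.biperm c c = 1 := by
  ext x; simp [biperm]

lemma connSum_biperm_nn (R Q : CGraph 3) (v : R.W) (v' : Q.W) {c d : Fin 3}
    (hc : c ≠ 0) (hd : d ≠ 0) :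
    (connSum R Q 0 v v').biperm c d = Equiv.sumCongr (R.biperm c d) (Q.biperm c d) := by
  ext x
  cases x <;> simp [biperm, connSum, hc, hd]

lemma connSum_biperm0_inl (R Q : CGraph 3) (v : R.W) (v' : Q.W) {d : Fin 3} (hd : d ≠ 0)
    {x : R.W} (hx : x ≠ v) :
    (connSum R Q 0 v v').biperm 0 d (Sum.inl x) = Sum.inl (R.biperm 0 d x) := by
  classical
  have h1 : (Sum.inl (R.σ 0 x) : R.B ⊕ Q.B) ≠ Sum.inl (R.σ 0 v) := by
    simp [(R.σ 0).injective.ne hx]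
  have h2 : (Sum.inl (R.σ 0 x) : R.B ⊕ Q.B) ≠ Sum.inr (Q.σ 0 v') := Sum.inl_ne_inr
  simp [biperm, connSum, hd, Equiv.swap_apply_def, (R.σ 0).injective.ne hx]
  erw [Equiv.trans_apply, Equiv.trans_apply]
  simp [Equiv.swap_apply_def, (R.σ 0).injective.ne hx]

lemma connSum_biperm0_inl_v (R Q : CGraph 3) (v : R.W) (v' : Q.W) {d : Fin 3} (hd : d ≠ 0) :
    (connSum R Q 0 v v').biperm 0 d (Sum.inl v) = Sum.inr (Q.biperm 0 d v') := by
  simp [biperm, connSum, hd]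
  erw [Equiv.trans_apply, Equiv.trans_apply]
  simp

lemma connSum_biperm0_inr (R Q : CGraph 3) (v : R.W) (v' : Q.W) {d : Fin 3} (hd : d ≠ 0)
    {y : Q.W} (hy : y ≠ v') :
    (connSum R Q 0 v v').biperm 0 d (Sum.inr y) = Sum.inr (Q.biperm 0 d y) := by
  classical
  have h1 : (Sum.inr (Q.σ 0 y) : R.B ⊕ Q.B) ≠ Sum.inr (Q.σ 0 v') := by
    simp [(Q.σ 0).injective.ne hy]
  have h2 : (Sum.inr (Q.σ 0 y) : R.B ⊕ Q.B) ≠ Sum.inl (R.σ 0 v) := Sum.inr_ne_inl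
  simp [biperm, connSum, hd, Equiv.swap_apply_def, (Q.σ 0).injective.ne hy]
  erw [Equiv.trans_apply, Equiv.trans_apply]
  simp [Equiv.swap_apply_def, (Q.σ 0).injective.ne hy]

lemma connSum_biperm0_inr_v' (R Q : CGraph 3) (v : R.W) (v' : Q.W) {d : Fin 3} (hd : d ≠ 0) :
    (connSum R Q 0 v v').biperm 0 d (Sum.inr v') = Sum.inl (R.biperm 0 d v) := by
  simp [biperm, connSum, hd]
  erw [Equiv.trans_apply, Equiv.trans_apply]
  simp


def Rel (G : CGraph D) (a b : G.W) : Prop :=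
  ∃ π ∈ Subgroup.closure {π : Equiv.Perm G.W | ∃ c d : Fin D, π = G.biperm c d}, π a = b

lemma Rel.refl (G : CGraph D) (a : G.W) : G.Rel a a := ⟨1, one_mem _, rfl⟩

lemma Rel.symm {G : CGraph D} {a b : G.W} (h : G.Rel a b) : G.Rel b a := by
  obtain ⟨π, hπ, h⟩ := h
  exact ⟨π⁻¹, inv_mem hπ, by simp [← h]⟩

lemma Rel.trans {G : CGraph D} {a b c : G.W} (h : G.Rel a b) (h' : G.Rel b c) : G.Rel a c := by
  obtain ⟨π, hπ, h⟩ := h; obtain ⟨ρ, hρ, h'⟩ := h'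
  exact ⟨ρ * π, mul_mem hρ hπ, by simp [Equiv.Perm.mul_apply, h, h']⟩

lemma rel_biperm (G : CGraph D) (c d : Fin D) (a : G.W) : G.Rel a (G.biperm c d a) :=
  ⟨G.biperm c d, Subgroup.subset_closure ⟨c, d, rfl⟩, rfl⟩

lemma sumCongr_zpow' {α β : Type} (f : Equiv.Perm α) (g : Equiv.Perm β) (k : ℤ) :
    (Equiv.sumCongr f g) ^ k = Equiv.sumCongr (f ^ k) (g ^ k) := by
  have h : Equiv.sumCongr f g = Equiv.Perm.sumCongrHom α β (f, g) := rfl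
  have h2 : ((f, g) : Equiv.Perm α × Equiv.Perm β) ^ k = (f ^ k, g ^ k) := by
    ext <;> simp
  rw [h, ← map_zpow, h2]
  rfl

lemma connSum_faceSize_inl (R Q : CGraph 3) (v : R.W) (v' : Q.W) (x : R.W) :
    (connSum R Q 0 v v').faceSize 1 2 (Sum.inl x) = R.faceSize 1 2 x := by
  have hb : (connSum R Q 0 v v').biperm 1 2 = Equiv.sumCongr (R.biperm 1 2) (Q.biperm 1 2) :=
    connSum_biperm_nn R Q v v' (by decide) (by decide)
  unfold faceSize
  rw [hb]
  symm
  refine Nat.card_eq_of_bijective (fun p => ⟨Sum.inl p.1, ?_⟩) ⟨?_, ?_⟩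
  · obtain ⟨k, hk⟩ := p.2
    exact ⟨k, by erw [sumCongr_zpow']; exact congrArg Sum.inl hk⟩
  · intro a b hab
    exact Subtype.ext (Sum.inl.inj (congrArg Subtype.val hab))
  · rintro ⟨w, k, hk⟩
    erw [sumCongr_zpow'] at hk
    refine ⟨⟨(R.biperm 1 2 ^ k) x, ⟨k, rfl⟩⟩, ?_⟩
    apply Subtype.ext
    exact hk

lemma connSum_faceSize_inr (R Q : CGraph 3) (v : R.W) (v' : Q.W) (y : Q.W) :
    (connSum R Q 0 v v').faceSize 1 2 (Sum.inr y) = Q.faceSize 1 2 y := by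
  have hb : (connSum R Q 0 v v').biperm 1 2 = Equiv.sumCongr (R.biperm 1 2) (Q.biperm 1 2) :=
    connSum_biperm_nn R Q v v' (by decide) (by decide)
  unfold faceSize
  rw [hb]
  symm
  refine Nat.card_eq_of_bijective (fun p => ⟨Sum.inr p.1, ?_⟩) ⟨?_, ?_⟩
  · obtain ⟨k, hk⟩ := p.2
    exact ⟨k, by erw [sumCongr_zpow']; exact congrArg Sum.inr hk⟩
  · intro a b hab
    exact Subtype.ext (Sum.inr.inj (congrArg Subtype.val hab))
  · rintro ⟨w, k, hk⟩
    erw [sumCongr_zpow'] at hk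
    refine ⟨⟨(Q.biperm 1 2 ^ k) y, ⟨k, rfl⟩⟩, ?_⟩
    apply Subtype.ext
    exact hk

lemma connSum_claimA (R Q : CGraph 3)
    (hRc : ∀ a b : R.W,
      ∃ π ∈ Subgroup.closure {π : Equiv.Perm R.W | ∃ c d : Fin 3, π = R.biperm c d}, π a = b)
    (v : R.W) (v' : Q.W) (x : R.W) :
    (connSum R Q 0 v v').Rel (Sum.inl x) (Sum.inl v) ∨
      (connSum R Q 0 v v').Rel (Sum.inl x) (Sum.inr v') := by
  set G' := connSum R Q 0 v v' with hG'
  set S : Set R.W :=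
    {z | G'.Rel (Sum.inl z) (Sum.inl v) ∨ G'.Rel (Sum.inl z) (Sum.inr v')} with hS
  suffices h : x ∈ S by exact h
  obtain ⟨π, hπ, hπv⟩ := hRc v x
  have step : ∀ c d : Fin 3, ∀ z ∈ S, R.biperm c d z ∈ S := by
    intro c d z hz
    by_cases hc : c = 0 <;> by_cases hd : d = 0
    · subst hc; subst hd; rw [biperm_self]; simpa using hz
    · subst hc
      by_cases hzv : z = v
      · rw [hzv]
        right
        have h0 := rel_biperm G' 0 d (Sum.inr v')
        rw [connSum_biperm0_inr_v' R Q v v' hd] at h0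
        exact h0.symm
      · have h1 : G'.Rel (Sum.inl (R.biperm 0 d z)) (Sum.inl z) := by
          have h0 := rel_biperm G' 0 d (Sum.inl z)
          rw [connSum_biperm0_inl R Q v v' hd hzv] at h0
          exact h0.symm
        rcases hz with h | h
        · exact Or.inl (h1.trans h)
        · exact Or.inr (h1.trans h)
    · subst hd
      by_cases h2 : R.biperm c 0 z = v
      · rw [h2]; exact Or.inl (Rel.refl _ _)
      · have hz2 : R.biperm 0 c (R.biperm c 0 z) = z := by
          simp [biperm]
        have h1 : G'.Rel (Sum.inl (R.biperm c 0 z)) (Sum.inl z) := by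
          have h0 := rel_biperm G' 0 c (Sum.inl (R.biperm c 0 z))
          rw [connSum_biperm0_inl R Q v v' hc h2, hz2] at h0
          exact h0
        rcases hz with h | h
        · exact Or.inl (h1.trans h)
        · exact Or.inr (h1.trans h)
    · have h1 : G'.Rel (Sum.inl (R.biperm c d z)) (Sum.inl z) := by
        have h0 := rel_biperm G' c d (Sum.inl z)
        rw [connSum_biperm_nn R Q v v' hc hd] at h0
        exact h0.symm
      rcases hz with h | h
      · exact Or.inl (h1.trans h)
      · exact Or.inr (h1.trans h)
  have main : ∀ π' ∈ Subgroup.closure {π : Equiv.Perm R.W | ∃ c d : Fin 3, π = R.biperm c d},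
      (∀ z ∈ S, π' z ∈ S) ∧ (∀ z ∈ S, π'⁻¹ z ∈ S) := by
    intro π' hπ'
    induction hπ' using Subgroup.closure_induction with
    | mem g hg =>
        obtain ⟨c, d, rfl⟩ := hg
        refine ⟨step c d, ?_⟩
        rw [biperm_symm]
        exact step d c
    | one => constructor <;> intro z hz <;> simpa using hz
    | mul g h hg hh ihg ihh =>
        refine ⟨fun z hz => ?_, fun z hz => ?_⟩
        · rw [Equiv.Perm.mul_apply]; exact ihg.1 _ (ihh.1 z hz)
        · rw [mul_inv_rev, Equiv.Perm.mul_apply]; exact ihh.2 _ (ihg.2 z hz)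
    | inv g hg ihg => exact ⟨ihg.2, by simpa using ihg.1⟩
  have hv : v ∈ S := Or.inl (Rel.refl _ _)
  have hfin := (main π hπ).1 v hv
  rwa [hπv] at hfin

lemma connSum_claimB (R Q : CGraph 3)
    (hQc : ∀ a b : Q.W,
      ∃ π ∈ Subgroup.closure {π : Equiv.Perm Q.W | ∃ c d : Fin 3, π = Q.biperm c d}, π a = b)
    (v : R.W) (v' : Q.W) (y : Q.W) :
    (connSum R Q 0 v v').Rel (Sum.inr y) (Sum.inr v') ∨
      (connSum R Q 0 v v').Rel (Sum.inr y) (Sum.inl v) := by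
  set G' := connSum R Q 0 v v' with hG'
  set S : Set Q.W :=
    {z | G'.Rel (Sum.inr z) (Sum.inr v') ∨ G'.Rel (Sum.inr z) (Sum.inl v)} with hS
  suffices h : y ∈ S by exact h
  obtain ⟨π, hπ, hπv⟩ := hQc v' y
  have step : ∀ c d : Fin 3, ∀ z ∈ S, Q.biperm c d z ∈ S := by
    intro c d z hz
    by_cases hc : c = 0 <;> by_cases hd : d = 0
    · subst hc; subst hd; rw [biperm_self]; simpa using hz
    · subst hc
      by_cases hzv : z = v'
      · rw [hzv]
        right
        have h0 := rel_biperm G' 0 d (Sum.inl v)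
        rw [connSum_biperm0_inl_v R Q v v' hd] at h0
        exact h0.symm
      · have h1 : G'.Rel (Sum.inr (Q.biperm 0 d z)) (Sum.inr z) := by
          have h0 := rel_biperm G' 0 d (Sum.inr z)
          rw [connSum_biperm0_inr R Q v v' hd hzv] at h0
          exact h0.symm
        rcases hz with h | h
        · exact Or.inl (h1.trans h)
        · exact Or.inr (h1.trans h)
    · subst hd
      by_cases h2 : Q.biperm c 0 z = v'
      · rw [h2]; exact Or.inl (Rel.refl _ _)
      · have hz2 : Q.biperm 0 c (Q.biperm c 0 z) = z := by
          simp [biperm]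
        have h1 : G'.Rel (Sum.inr (Q.biperm c 0 z)) (Sum.inr z) := by
          have h0 := rel_biperm G' 0 c (Sum.inr (Q.biperm c 0 z))
          rw [connSum_biperm0_inr R Q v v' hc h2, hz2] at h0
          exact h0
        rcases hz with h | h
        · exact Or.inl (h1.trans h)
        · exact Or.inr (h1.trans h)
    · have h1 : G'.Rel (Sum.inr (Q.biperm c d z)) (Sum.inr z) := by
        have h0 := rel_biperm G' c d (Sum.inr z)
        rw [connSum_biperm_nn R Q v v' hc hd] at h0
        exact h0.symm
      rcases hz with h | h
      · exact Or.inl (h1.trans h)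
      · exact Or.inr (h1.trans h)
  have main : ∀ π' ∈ Subgroup.closure {π : Equiv.Perm Q.W | ∃ c d : Fin 3, π = Q.biperm c d},
      (∀ z ∈ S, π' z ∈ S) ∧ (∀ z ∈ S, π'⁻¹ z ∈ S) := by
    intro π' hπ'
    induction hπ' using Subgroup.closure_induction with
    | mem g hg =>
        obtain ⟨c, d, rfl⟩ := hg
        refine ⟨step c d, ?_⟩
        rw [biperm_symm]
        exact step d c
    | one => constructor <;> intro z hz <;> simpa using hz
    | mul g h hg hh ihg ihh =>
        refine ⟨fun z hz => ?_, fun z hz => ?_⟩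
        · rw [Equiv.Perm.mul_apply]; exact ihg.1 _ (ihh.1 z hz)
        · rw [mul_inv_rev, Equiv.Perm.mul_apply]; exact ihh.2 _ (ihg.2 z hz)
    | inv g hg ihg => exact ⟨ihg.2, by simpa using ihg.1⟩
  have hv : v' ∈ S := Or.inl (Rel.refl _ _)
  have hfin := (main π hπ).1 v' hv
  rwa [hπv] at hfin

lemma connSum_claimC (R Q : CGraph 3) (v : R.W) (v' : Q.W) :
    (connSum R Q 0 v v').Rel (Sum.inl v) (Sum.inr v') := by
  classical
  set G' := connSum R Q 0 v v' with hG'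
  set π := G'.biperm 0 1 with hπd
  have hπmem : π ∈ Subgroup.closure {p : Equiv.Perm G'.W | ∃ c d : Fin 3, p = G'.biperm c d} :=
    Subgroup.subset_closure ⟨0, 1, rfl⟩
  set b := Q.biperm 0 1 with hb
  have h10 : (1 : Fin 3) ≠ 0 := by decide
  have key : ∀ n : ℕ, ∀ y : Q.W, (b ^ n) y = v' → π.SameCycle (Sum.inr y) (Sum.inr v') := by
    intro n
    induction n with
    | zero =>
        intro y h
        simp only [pow_zero, Equiv.Perm.one_apply] at h
        rw [h]
        exact Equiv.Perm.SameCycle.refl _ _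
    | succ n ih =>
        intro y h
        by_cases hy : y = v'
        · rw [hy]
          exact Equiv.Perm.SameCycle.refl _ _
        · have h1 : π (Sum.inr y) = Sum.inr (b y) := connSum_biperm0_inr R Q v v' h10 hy
          have h2 : (b ^ n) (b y) = v' := by
            rw [pow_succ, Equiv.Perm.mul_apply] at h
            exact h
          have h3 : π.SameCycle (Sum.inr y) (Sum.inr (b y)) := ⟨1, by simpa using h1⟩
          exact h3.trans (ih _ h2)
  haveI := Q.finW
  have hord : b ^ orderOf b = 1 := pow_orderOf_eq_one b
  have hpos : 0 < orderOf b := orderOf_pos b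
  have h3 : (b ^ (orderOf b - 1)) (b v') = v' := by
    rw [← Equiv.Perm.mul_apply, ← pow_succ, Nat.sub_add_cancel hpos, hord]
    rfl
  have h4 : π.SameCycle (Sum.inr (b v')) (Sum.inr v') := key _ _ h3
  have h5 : π (Sum.inl v) = Sum.inr (b v') := connSum_biperm0_inl_v R Q v v' h10
  have h6 : π.SameCycle (Sum.inl v) (Sum.inr v') :=
    Equiv.Perm.SameCycle.trans ⟨1, by simpa using h5⟩ h4
  obtain ⟨k, hk⟩ := h6
  exact ⟨π ^ k, Subgroup.zpow_mem _ hπmem k, hk⟩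

end CGraph

/-- Fix a complex matrix model with finite exponent set `I` (a finite
set of positive integers).  If `R` and `Q` are connected Feynman graphs of this model,
`e = (v, σ₀ v)` a color-0 edge of `R` and `f = (v', τ₀ v')` a color-0 edge of `Q`, then
the connected sum `R #_{e,f} Q` is again a connected Feynman graph of the same model. -/
theorem connSum_isModelFeynman (I : Finset ℕ) (hI : ∀ p ∈ I, 0 < p)
    (R Q : CGraph 3) (hRc : R.Connected) (hQc : Q.Connected)
    (hR : CGraph.IsModelFeynman I R) (hQ : CGraph.IsModelFeynman I Q)
    (v : R.W) (v' : Q.W) :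
    (CGraph.connSum R Q 0 v v').Connected ∧
      CGraph.IsModelFeynman I (CGraph.connSum R Q 0 v v') := by
  constructor
  · have hC := CGraph.connSum_claimC R Q v v'
    have key : ∀ a : (CGraph.connSum R Q 0 v v').W,
        (CGraph.connSum R Q 0 v v').Rel a (Sum.inl v) := by
      intro a
      obtain x | y := a
      · rcases CGraph.connSum_claimA R Q hRc v v' x with h | h
        · exact h
        · exact h.trans hC.symm
      · rcases CGraph.connSum_claimB R Q hQc v v' y with h | h
        · exact (h.trans hC.symm)
        · exact h
    intro a b
    exact (key a).trans (key b).symm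
  · intro w
    obtain x | y := w
    · rw [CGraph.connSum_faceSize_inl R Q v v' x]
      exact hR x
    · rw [CGraph.connSum_faceSize_inr R Q v v' y]
      exact hQ y
end
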